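/- arXiv:1103.6233 — 7 statements merged into one kernel-verified Lean document; each statement's English description precedes it below -/
import Mathlib

section
/- The Zariski–Riemann space ZR(K/k), endowed with the topology generated by the sets U(S) = {R ∈ ZR(K/k) : S ⊆ R} for S ranging over all finite subsets of K, is quasi-compact: every open cover of ZR(K/k) by such opens (equivalently, every open cover) admits a finite subcover. -/
open Filter Topology

/-- The Zariski–Riemann space of `K` over `k`: all valuation subrings of `K`
containing (the image of) `k`. -/
def ZR (k K : Type*) [Field k] [Field K] [Algebra k K] : Type _ :=
  {R : ValuationSubring K // ∀ x : k, algebraMap k K x ∈ R}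

/-- The topology on `ZR k K` generated by the sets `U(S) = {R | S ⊆ R}`,
for `S` ranging over the finite subsets of `K`. -/
instance ZR.instTopologicalSpace (k K : Type*) [Field k] [Field K] [Algebra k K] :
    TopologicalSpace (ZR k K) :=
  TopologicalSpace.generateFrom
    {U : Set (ZR k K) | ∃ S : Finset K, U = {R : ZR k K | ∀ f ∈ S, f ∈ R.1}}

/-- Zariski's theorem: the Zariski–Riemann space of a finitely generated field
extension `K/k` is quasi-compact. -/
theorem ZR.compactSpace (k K : Type*) [Field k] [Field K] [Algebra k K]
    (s : Finset K) (hs : IntermediateField.adjoin k (s : Set K) = ⊤) :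
    CompactSpace (ZR k K) := by
  constructor
  rw [isCompact_iff_ultrafilter_le_nhds]
  intro F _
  -- the candidate limit valuation subring
  set A : ValuationSubring K :=
    { carrier := {x : K | {R : ZR k K | x ∈ R.1} ∈ F}
      one_mem' := by
        simp only [Set.mem_setOf_eq]
        exact F.toFilter.mem_of_superset Filter.univ_mem (fun R _ => R.1.one_mem)
      mul_mem' := by
        intro a b ha hb
        exact F.toFilter.mem_of_superset (Filter.inter_mem ha hb)
          (fun R hR => show a * b ∈ R.1 from mul_mem hR.1 hR.2)
      zero_mem' := by
        simp only [Set.mem_setOf_eq]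
        exact F.toFilter.mem_of_superset Filter.univ_mem (fun R _ => R.1.zero_mem)
      add_mem' := by
        intro a b ha hb
        exact F.toFilter.mem_of_superset (Filter.inter_mem ha hb)
          (fun R hR => show a + b ∈ R.1 from add_mem hR.1 hR.2)
      neg_mem' := by
        intro a ha
        exact F.toFilter.mem_of_superset ha (fun R hR => show -a ∈ R.1 from neg_mem hR)
      mem_or_inv_mem' := by
        intro x
        have : {R : ZR k K | x ∈ R.1} ∪ {R : ZR k K | x⁻¹ ∈ R.1} ∈ F := by
          apply F.toFilter.mem_of_superset Filter.univ_mem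
          intro R _
          exact R.1.mem_or_inv_mem x
        exact Ultrafilter.union_mem_iff.mp this } with hA
  have hAk : ∀ x : k, algebraMap k K x ∈ A := by
    intro x
    exact F.toFilter.mem_of_superset Filter.univ_mem (fun R _ => R.2 x)
  refine ⟨(id ⟨A, hAk⟩ : ZR k K), ?_⟩
  -- convergence
  rw [TopologicalSpace.nhds_generateFrom]
  refine ⟨Set.mem_univ _, le_iInf₂ fun U hU => ?_⟩
  obtain ⟨hAU, S, rfl⟩ := hU
  rw [Filter.le_principal_iff]
  have : ∀ f ∈ S, {R : ZR k K | f ∈ R.1} ∈ F := fun f hf => hAU f hf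
  have key : (⋂ f ∈ S, {R : ZR k K | f ∈ R.1}) ∈ F.toFilter :=
    (Filter.biInter_finset_mem S).mpr this
  apply F.toFilter.mem_of_superset key
  intro R hR f hf
  exact Set.mem_iInter₂.mp hR f hf
end

section
/- For any two points μ, ν of the Zariski–Riemann space ZR(K/k), the point ν lies in the topological closure of the singleton {μ} if and only if the valuation subring of ν is contained in the valuation subring of μ (as subsets of K). -/
open Filter Topology

/-- `ν` lies in the closure of `{μ}` in the Zariski–Riemann space iff the valuation
subring of `ν` is contained in that of `μ`. -/
theorem ZR.mem_closure_singleton_iff (k K : Type*) [Field k] [Field K] [Algebra k K]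
    (s : Finset K) (hs : IntermediateField.adjoin k (s : Set K) = ⊤)
    (μ ν : ZR k K) :
    ν ∈ closure ({μ} : Set (ZR k K)) ↔ (ν.1 : Set K) ⊆ (μ.1 : Set K) := by
  rw [mem_closure_iff]
  constructor
  · intro h x hx
    obtain ⟨R, hR1, hR2⟩ := h {R : ZR k K | ∀ f ∈ ({x} : Finset K), f ∈ R.1}
      (TopologicalSpace.isOpen_generateFrom_of_mem ⟨{x}, rfl⟩)
      (by simpa using hx)
    rw [Set.mem_singleton_iff] at hR2
    subst hR2
    simpa using hR1
  · intro hsub U hU hν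
    have hU' : TopologicalSpace.GenerateOpen
        {U : Set (ZR k K) | ∃ S : Finset K, U = {R : ZR k K | ∀ f ∈ S, f ∈ R.1}} U := hU
    refine ⟨μ, ?_, rfl⟩
    clear hU
    induction hU' with
    | basic U hB => obtain ⟨S, rfl⟩ := hB; exact fun f hf => hsub (hν f hf)
    | univ => trivial
    | inter U V _ _ ihU ihV => exact ⟨ihU hν.1, ihV hν.2⟩
    | sUnion S _ ih =>
      obtain ⟨U, hU, hx⟩ := hν
      exact ⟨U, hU, ih U hU hx⟩
end

section
/- The normalized generic fiber ]X[_{A,f} is sequentially compact: every sequence of points of ]X[_{A,f} admits a subsequence converging to a point of ]X[_{A,f}. -/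
open Filter Topology

/-- The normalized generic fiber `]X[_{A,f}` of the formal completion of `X = Spec A`
along `D = {f = 0}`: bounded multiplicative semi-norms `φ` on `A` with `φ f = e⁻¹`,
topologized by pointwise convergence (as a subset of `A → ℝ` with the product topology). -/
def NGF (A : Type*) [CommRing A] (f : A) : Set (A → ℝ) :=
  {φ | φ 0 = 0 ∧ φ 1 = 1 ∧ (∀ a b, φ (a * b) = φ a * φ b) ∧
    (∀ a b, φ (a + b) ≤ max (φ a) (φ b)) ∧ (∀ a, 0 ≤ φ a ∧ φ a ≤ 1) ∧
    φ f = Real.exp (-1)}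

namespace NGFAux

variable {k A : Type*} [Field k] [CommRing A] [Algebra k A] {f : A} {φ : A → ℝ}

lemma ngf_zero (h : φ ∈ NGF A f) : φ 0 = 0 := h.1
lemma ngf_one (h : φ ∈ NGF A f) : φ 1 = 1 := h.2.1
lemma ngf_mul (h : φ ∈ NGF A f) (a b : A) : φ (a * b) = φ a * φ b := h.2.2.1 a b
lemma ultra (h : φ ∈ NGF A f) (a b : A) : φ (a + b) ≤ max (φ a) (φ b) := h.2.2.2.1 a b
lemma nonneg (h : φ ∈ NGF A f) (a : A) : 0 ≤ φ a := (h.2.2.2.2.1 a).1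
lemma le_one (h : φ ∈ NGF A f) (a : A) : φ a ≤ 1 := (h.2.2.2.2.1 a).2

lemma ngf_neg (h : φ ∈ NGF A f) (a : A) : φ (-a) = φ a := by
  have h1 : φ (-1 : A) * φ (-1 : A) = 1 := by
    rw [← ngf_mul h]; norm_num [ngf_one h]
  have h2 : φ (-1 : A) = 1 := by
    nlinarith [nonneg h (-1 : A), le_one h (-1 : A)]
  calc φ (-a) = φ ((-1) * a) := by norm_num
    _ = φ a := by rw [ngf_mul h, h2, one_mul]

lemma ngf_algebraMap (h : φ ∈ NGF A f) {c : k} (hc : c ≠ 0) :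
    φ (algebraMap k A c) = 1 := by
  have h1 : φ (algebraMap k A c) * φ (algebraMap k A c⁻¹) = 1 := by
    rw [← ngf_mul h, ← map_mul (algebraMap k A), mul_inv_cancel₀ hc,
      map_one, ngf_one h]
  nlinarith [nonneg h (algebraMap k A c), le_one h (algebraMap k A c),
    nonneg h (algebraMap k A c⁻¹), le_one h (algebraMap k A c⁻¹)]

lemma ngf_smul (h : φ ∈ NGF A f) {c : k} (hc : c ≠ 0) (a : A) : φ (c • a) = φ a := by
  rw [Algebra.smul_def, ngf_mul h, ngf_algebraMap h hc, one_mul]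

/-- ultrametric equality when values differ -/
lemma add_eq_of_lt (h : φ ∈ NGF A f) {a b : A} (hab : φ b < φ a) : φ (a + b) = φ a := by
  have h1 : φ (a + b) ≤ φ a := (ultra h a b).trans_eq (max_eq_left hab.le)
  have h2 : φ a ≤ max (φ (a + b)) (φ b) := by
    have := ultra h (a + b) (-b)
    rwa [add_neg_cancel_right, ngf_neg h] at this
  rcases max_cases (φ (a + b)) (φ b) with ⟨he, _⟩ | ⟨he, _⟩
  · linarith [h2.trans_eq he]
  · linarith [h2.trans_eq he]

lemma sum_le (h : φ ∈ NGF A f) {ι : Type*} {B : ℝ} (hB : 0 ≤ B) (t : Finset ι) (x : ι → A)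
    (hx : ∀ i ∈ t, φ (x i) ≤ B) : φ (∑ i ∈ t, x i) ≤ B := by
  classical
  induction t using Finset.induction_on with
  | empty => simpa [ngf_zero h] using hB
  | insert _ _ hnot ih =>
    rename_i a s
    rw [Finset.sum_insert hnot]
    refine (ultra h _ _).trans (max_le (hx a (Finset.mem_insert_self a s)) ?_)
    exact ih fun i hi => hx i (Finset.mem_insert_of_mem hi)


/-- nonzero-`φ`-value vectors with pairwise distinct values are linearly independent -/
lemma li_of_distinct (h : φ ∈ NGF A f) {m : ℕ} (v : Fin m → A)
    (hpos : ∀ i, 0 < φ (v i)) (hdist : ∀ i j, i ≠ j → φ (v i) ≠ φ (v j)) :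
    LinearIndependent k v := by
  classical
  rw [linearIndependent_iff']
  intro s g hsum i hi
  by_contra hgi
  -- restrict to the support
  set s' : Finset (Fin m) := s.filter (fun i => g i ≠ 0) with hs'
  have hi' : i ∈ s' := Finset.mem_filter.2 ⟨hi, hgi⟩
  have hsum' : ∑ j ∈ s', g j • v j = 0 := by
    have heq : ∑ j ∈ s', g j • v j = ∑ j ∈ s, g j • v j :=
      Finset.sum_filter_of_ne (fun x _ hfx hg0 => hfx (by rw [hg0, zero_smul]))
    rw [heq]; exact hsum
  obtain ⟨i₀, hi₀s, hi₀max⟩ := Finset.exists_max_image s' (fun j => φ (v j)) ⟨i, hi'⟩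
  have hg₀ : g i₀ ≠ 0 := (Finset.mem_filter.1 hi₀s).2
  -- the rest of the sum
  have hsplit : g i₀ • v i₀ + ∑ j ∈ s'.erase i₀, g j • v j = 0 := by
    have h2 : ∑ j ∈ s'.erase i₀, g j • v j + g i₀ • v i₀ = 0 := by
      rw [Finset.sum_erase_add _ _ hi₀s]; exact hsum'
    rw [add_comm]; exact h2
  have hrest : φ (∑ j ∈ s'.erase i₀, g j • v j) < φ (v i₀) := by
    rcases Finset.eq_empty_or_nonempty (s'.erase i₀) with he | hne
    · rw [he, Finset.sum_empty, ngf_zero h]; exact hpos i₀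
    · obtain ⟨i₁, hi₁, hi₁max⟩ := Finset.exists_max_image (s'.erase i₀) (fun j => φ (v j)) hne
      have hlt : φ (v i₁) < φ (v i₀) := by
        have hne₁ : i₁ ≠ i₀ := Finset.ne_of_mem_erase hi₁
        exact lt_of_le_of_ne (hi₀max i₁ (Finset.mem_of_mem_erase hi₁)) (hdist i₁ i₀ hne₁)
      refine lt_of_le_of_lt (sum_le h (le_of_lt (hpos i₁)) _ _ ?_) hlt
      intro j hj
      have hgj : g j ≠ 0 := (Finset.mem_filter.1 (Finset.mem_of_mem_erase hj)).2
      rw [ngf_smul h hgj]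
      exact hi₁max j hj
  have : φ (v i₀) = 0 := by
    have := add_eq_of_lt h (a := g i₀ • v i₀) (b := ∑ j ∈ s'.erase i₀, g j • v j)
      (by rwa [ngf_smul h hg₀])
    rw [hsplit, ngf_zero h] at this
    rw [← ngf_smul h hg₀ (v i₀), ← this]
  exact absurd this (ne_of_gt (hpos i₀))

/-- the sup of `φ` on a finite-dimensional subspace is attained -/
lemma exists_max (h : φ ∈ NGF A f) (V : Submodule k A) [FiniteDimensional k V] :
    ∃ u ∈ V, ∀ w ∈ V, φ w ≤ φ u := by
  by_contra hc
  push_neg at hc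
  -- build a strictly increasing sequence of values
  have step : ∀ u : A, u ∈ V → ∃ w : A, w ∈ V ∧ φ u < φ w := by
    intro u hu
    obtain ⟨w, hw, hlt⟩ := hc u hu
    exact ⟨w, hw, hlt⟩
  choose nxt hnxtV hnxtlt using step
  let seq : ℕ → {x : A // x ∈ V} := fun n => Nat.rec ⟨0, V.zero_mem⟩
    (fun _ p => ⟨nxt p.1 p.2, hnxtV p.1 p.2⟩) n
  have hmono : StrictMono (fun n => φ (seq n).1) :=
    strictMono_nat_of_lt_succ (fun n => hnxtlt (seq n).1 (seq n).2)
  set d := Module.finrank k V with hd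
  let v : Fin (d + 1) → A := fun i => (seq (i.1 + 1)).1
  have hvpos : ∀ i, 0 < φ (v i) := by
    intro i
    have h0 : φ ((seq 0).1) = 0 := by
      show φ (0 : A) = 0; exact ngf_zero h
    calc (0:ℝ) = φ ((seq 0).1) := h0.symm
      _ < φ ((seq (i.1+1)).1) := hmono (Nat.succ_pos i.1)
  have hvdist : ∀ i j, i ≠ j → φ (v i) ≠ φ (v j) := by
    intro i j hij
    have : (i.1 + 1 : ℕ) ≠ j.1 + 1 := by
      simp only [ne_eq, Nat.succ_inj]
      exact fun hh => hij (Fin.ext hh)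
    exact fun hval => this (hmono.injective hval)
  have hli : LinearIndependent k v := li_of_distinct h v hvpos hvdist
  -- coerce into V
  have hmem : ∀ i, v i ∈ V := fun i => (seq (i.1+1)).2
  let v' : Fin (d + 1) → V := fun i => ⟨v i, hmem i⟩
  have hli' : LinearIndependent k v' := by
    have hcomp : v = V.subtype ∘ v' := rfl
    rw [hcomp] at hli
    exact LinearIndependent.of_comp V.subtype hli
  have := hli'.fintype_card_le_finrank
  rw [Fintype.card_fin] at this
  omega


/-- finrank is monotone for nested submodules when the larger is f.d. -/
lemma finrank_mono_of_le {p q : Submodule k A} (h : p ≤ q) [FiniteDimensional k q] :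
    Module.finrank k p ≤ Module.finrank k q := by
  rw [← LinearEquiv.finrank_eq (Submodule.comapSubtypeEquivOfLe h)]
  exact Submodule.finrank_le _

lemma fd_of_le {p q : Submodule k A} (h : p ≤ q) [FiniteDimensional k q] :
    FiniteDimensional k p :=
  Module.Finite.equiv (Submodule.comapSubtypeEquivOfLe h)

lemma finrank_lt_of_lt {p q : Submodule k A} (h : p < q) [FiniteDimensional k q] :
    Module.finrank k p < Module.finrank k q := by
  rw [← LinearEquiv.finrank_eq (Submodule.comapSubtypeEquivOfLe h.le)]
  refine Submodule.finrank_lt ?_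
  rcases lt_iff_le_and_ne.1 h with ⟨hle, hne⟩
  refine id ?_
  intro htop
  apply hne
  refine le_antisymm hle ?_
  intro x hx
  have : (⟨x, hx⟩ : q) ∈ Submodule.comap q.subtype p := htop ▸ Submodule.mem_top
  exact this

/-- the subspace of eventual members of a sequence of submodules -/
def evSub (W : ℕ → Submodule k A) (g : ℕ → ℕ) : Submodule k A where
  carrier := {x | ∀ᶠ j in atTop, x ∈ W (g j)}
  add_mem' := fun hx hy => hx.and hy |>.mono (fun j ⟨h1, h2⟩ => (W (g j)).add_mem h1 h2)
  zero_mem' := Eventually.of_forall (fun j => (W (g j)).zero_mem)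
  smul_mem' := fun c _ hx => hx.mono (fun j hj => (W (g j)).smul_mem c hj)

lemma evSub_le {W : ℕ → Submodule k A} {V : Submodule k A} (hW : ∀ n, W n ≤ V)
    (g : ℕ → ℕ) : evSub W g ≤ V := by
  intro x hx
  obtain ⟨j, hj⟩ := hx.exists
  exact hW (g j) hj

lemma evSub_mono {W : ℕ → Submodule k A} {g h : ℕ → ℕ} (hh : StrictMono h) :
    evSub W g ≤ evSub W (g ∘ h) := fun _ hx => hh.tendsto_atTop.eventually hx

/-- dichotomy extraction: a subsequence along which every vector is eventually in,
or eventually out of, the `W`'s, according to membership in a fixed subspace `E`. -/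
lemma dichotomy (V : Submodule k A) [FiniteDimensional k V] (W : ℕ → Submodule k A)
    (hW : ∀ n, W n ≤ V) :
    ∃ g : ℕ → ℕ, StrictMono g ∧
      (∀ v ∈ evSub W g, ∀ᶠ j in atTop, v ∈ W (g j)) ∧
      (∀ v, v ∉ evSub W g → ∀ᶠ j in atTop, v ∉ W (g j)) := by
  classical
  have hfd : ∀ g : ℕ → ℕ, FiniteDimensional k (evSub W g) :=
    fun g => fd_of_le (evSub_le hW g)
  set S : Set ℕ := {n | ∃ g : ℕ → ℕ, StrictMono g ∧ Module.finrank k (evSub W g) = n}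
    with hS
  have hne : S.Nonempty := ⟨_, id, strictMono_id, rfl⟩
  have hbdd : BddAbove S := by
    refine ⟨Module.finrank k V, ?_⟩
    rintro n ⟨g, -, rfl⟩
    have := hfd g
    exact finrank_mono_of_le (evSub_le hW g)
  obtain ⟨g, hg, hgrk⟩ := Nat.sSup_mem hne hbdd
  refine ⟨g, hg, fun v hv => hv, ?_⟩
  intro v hv
  by_contra hcon
  rw [Filter.not_eventually] at hcon
  obtain ⟨h, hh, hmem⟩ := Filter.extraction_of_frequently_atTop (by
    simpa using hcon)
  have hvE : v ∈ evSub W (g ∘ h) := Eventually.of_forall hmem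
  have hlt : evSub W g < evSub W (g ∘ h) :=
    lt_of_le_of_ne (evSub_mono hh) (fun he => hv (he ▸ hvE))
  have := hfd (g ∘ h)
  have hrk : Module.finrank k (evSub W g) < Module.finrank k (evSub W (g ∘ h)) :=
    finrank_lt_of_lt hlt
  have hmem2 : Module.finrank k (evSub W (g ∘ h)) ∈ S := ⟨g ∘ h, hg.comp hh, rfl⟩
  have := le_csSup hbdd hmem2
  omega


/-- strict sublevel sets are submodules (for positive level) -/
def sublevel (h : φ ∈ NGF A f) (V : Submodule k A) {c : ℝ} (hc : 0 < c) :
    Submodule k A where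
  carrier := {x | x ∈ V ∧ φ x < c}
  add_mem' := fun hx hy => ⟨V.add_mem hx.1 hy.1,
    lt_of_le_of_lt (ultra h _ _) (max_lt hx.2 hy.2)⟩
  zero_mem' := ⟨V.zero_mem, by rw [ngf_zero h]; exact hc⟩
  smul_mem' := by
    intro a x hx
    refine ⟨V.smul_mem a hx.1, ?_⟩
    rcases eq_or_ne a 0 with rfl | ha
    · rw [zero_smul, ngf_zero h]; exact hc
    · rw [ngf_smul h ha]; exact hx.2

/-- Key extraction: on a finite-dimensional subspace, any sequence in `NGF` has a
pointwise convergent subsequence. -/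
lemma conv_findim (d : ℕ) (V : Submodule k A) [FiniteDimensional k V]
    (hd : Module.finrank k V ≤ d) (ψ : ℕ → A → ℝ) (hψ : ∀ n, ψ n ∈ NGF A f) :
    ∃ g : ℕ → ℕ, StrictMono g ∧
      ∀ v ∈ V, ∃ L : ℝ, Tendsto (fun j => ψ (g j) v) atTop (𝓝 L) := by
  classical
  induction d generalizing V ψ with
  | zero =>
    refine ⟨id, strictMono_id, fun v hv => ⟨0, ?_⟩⟩
    have hv0 : v = 0 := by
      by_contra hne
      have : Nontrivial V := ⟨⟨⟨v, hv⟩, 0, by simpa using hne⟩⟩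
      have := Module.finrank_pos (R := k) (M := V)
      omega
    subst hv0
    simp only [ngf_zero (hψ _)]; exact tendsto_const_nhds
  | succ d ih =>
    -- maximizers
    choose u huV humax using fun n => exists_max (hψ n) V
    set M : ℕ → ℝ := fun n => ψ n (u n) with hM
    have hMmem : ∀ n, M n ∈ Set.Icc (0:ℝ) 1 :=
      fun n => ⟨nonneg (hψ n) _, le_one (hψ n) _⟩
    obtain ⟨Ml, hMl, g₀, hg₀, hg₀t⟩ := (isCompact_Icc (a := (0:ℝ)) (b := 1)).tendsto_subseq hMmem
    rcases eq_or_lt_of_le hMl.1 with hM0 | hMpos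
    · -- limit of maxima is 0 : everything tends to 0
      refine ⟨g₀, hg₀, fun v hv => ⟨0, ?_⟩⟩
      have hub : ∀ j, ψ (g₀ j) v ≤ M (g₀ j) := fun j => humax (g₀ j) v hv
      have hlb : ∀ j, 0 ≤ ψ (g₀ j) v := fun j => nonneg (hψ _) v
      have : Tendsto (fun j => M (g₀ j)) atTop (𝓝 0) := by
        rw [hM0]; exact hg₀t
      exact squeeze_zero hlb hub this
    · -- positive limit: eventually M > Ml/2 > 0
      obtain ⟨N, hN⟩ := (Filter.eventually_atTop).1
        (hg₀t.eventually (eventually_gt_nhds (by linarith : Ml / 2 < Ml)))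
      set g₀' : ℕ → ℕ := fun j => g₀ (j + N) with hg₀'
      have hg₀'mono : StrictMono g₀' := hg₀.comp (fun a b hab => by omega)
      have hg₀'pos : ∀ j, Ml / 2 < M (g₀' j) := fun j => hN (j + N) (by omega)
      have hg₀'t : Tendsto (fun j => M (g₀' j)) atTop (𝓝 Ml) :=
        hg₀t.comp (tendsto_atTop_atTop.2 (fun b => ⟨b, fun a ha => by omega⟩))
      -- proper sublevel subspaces
      have hMl2 : (0:ℝ) < Ml / 2 := by linarith
      set W : ℕ → Submodule k A := fun j =>
        sublevel (hψ (g₀' j)) V (lt_trans hMl2 (hg₀'pos j)) with hW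
      have hWle : ∀ j, W j ≤ V := fun j x hx => hx.1
      obtain ⟨g₁, hg₁, hEin, hEout⟩ := dichotomy V W hWle
      set E := evSub W g₁ with hE
      have hEleV : E ≤ V := fun x hx => by
        obtain ⟨j, hj⟩ := hx.exists; exact hWle (g₁ j) hj
      have : FiniteDimensional k E := fd_of_le hEleV
      -- E is contained in some W j, hence of smaller rank
      have hErank : Module.finrank k E ≤ d := by
        obtain ⟨s, hs⟩ := Module.Finite.iff_fg.1 this
        have hsev : ∀ᶠ j in atTop, ∀ x ∈ (s : Set A), x ∈ W (g₁ j) := by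
          rw [eventually_all_finite s.finite_toSet]
          intro x hx
          exact hEin x (hs ▸ Submodule.subset_span hx)
        obtain ⟨j₀, hj₀⟩ := hsev.exists
        have hEsub : E ≤ W (g₁ j₀) := by
          rw [← hs]
          exact Submodule.span_le.2 hj₀
        have hWlt : W (g₁ j₀) < V := by
          refine lt_of_le_of_ne (hWle _) (fun hWV => ?_)
          have : u (g₀' (g₁ j₀)) ∈ W (g₁ j₀) := hWV ▸ huV _
          exact absurd this.2 (lt_irrefl _)
        have := fd_of_le (hWle (g₁ j₀))
        have h1 : Module.finrank k (W (g₁ j₀)) < Module.finrank k V := finrank_lt_of_lt hWlt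
        have h2 : Module.finrank k E ≤ Module.finrank k (W (g₁ j₀)) := finrank_mono_of_le hEsub
        omega
      -- apply induction hypothesis on E
      obtain ⟨g₂, hg₂, hconv⟩ := ih E hErank (fun n => ψ (g₀' (g₁ n))) (fun n => hψ _)
      refine ⟨g₀' ∘ g₁ ∘ g₂, hg₀'mono.comp (hg₁.comp hg₂), ?_⟩
      intro v hv
      by_cases hvE : v ∈ E
      · exact hconv v hvE
      · refine ⟨Ml, ?_⟩
        have hvout : ∀ᶠ j in atTop, v ∉ W (g₁ (g₂ j)) :=
          hg₂.tendsto_atTop.eventually (hEout v hvE)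
        have heq : ∀ᶠ j in atTop, ψ (g₀' (g₁ (g₂ j))) v = M (g₀' (g₁ (g₂ j))) := by
          refine hvout.mono (fun j hj => ?_)
          have h1 : ψ (g₀' (g₁ (g₂ j))) v ≤ M (g₀' (g₁ (g₂ j))) := humax _ v hv
          have h2 : ¬ (v ∈ V ∧ ψ (g₀' (g₁ (g₂ j))) v < M (g₀' (g₁ (g₂ j)))) := hj
          push_neg at h2
          exact le_antisymm h1 (h2 hv)
        have hMt : Tendsto (fun j => M (g₀' (g₁ (g₂ j)))) atTop (𝓝 Ml) :=
          hg₀'t.comp (hg₁.comp hg₂).tendsto_atTop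
        exact Tendsto.congr' (heq.mono fun j hj => hj.symm) hMt


/-- exhaustion of a finite-type algebra by finite-dimensional subspaces -/
lemma exists_exhaustion [Algebra.FiniteType k A] :
    ∃ V : ℕ → Submodule k A, (∀ m, FiniteDimensional k (V m)) ∧ ∀ a : A, ∃ m, a ∈ V m := by
  obtain ⟨s, hs⟩ := (inferInstance : Algebra.FiniteType k A)
  set P : Submodule k A := Submodule.span k (insert 1 ↑s) with hP
  have h1P : (1 : A) ∈ P := Submodule.subset_span (Set.mem_insert 1 _)
  refine ⟨fun m => P ^ m, ?_, ?_⟩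
  · intro m
    exact Module.Finite.iff_fg.2 ((Submodule.fg_span (Set.Finite.insert 1 s.finite_toSet)).pow m)
  · have hmono : Monotone (fun m => P ^ m) := by
      apply monotone_nat_of_le_succ
      intro m x hx
      have : x * 1 ∈ P ^ m * P := Submodule.mul_mem_mul hx h1P
      rwa [mul_one, ← pow_succ] at this
    intro a
    have ha : a ∈ Algebra.adjoin k (s : Set A) := hs ▸ Algebra.mem_top
    induction ha using Algebra.adjoin_induction with
    | mem x hx => exact ⟨1, by show x ∈ P ^ 1; rw [pow_one]; exact Submodule.subset_span (Set.mem_insert_of_mem _ hx)⟩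
    | algebraMap r =>
      refine ⟨1, by show algebraMap k A r ∈ P ^ 1; rw [pow_one, Algebra.algebraMap_eq_smul_one]; exact P.smul_mem r h1P⟩
    | add x y hx hy ihx ihy =>
      obtain ⟨m, hm⟩ := ihx
      obtain ⟨l, hl⟩ := ihy
      exact ⟨max m l, Submodule.add_mem _ (hmono (le_max_left m l) hm)
        (hmono (le_max_right m l) hl)⟩
    | mul x y hx hy ihx ihy =>
      obtain ⟨m, hm⟩ := ihx
      obtain ⟨l, hl⟩ := ihy
      exact ⟨m + l, by show x * y ∈ P ^ (m + l); rw [pow_add]; exact Submodule.mul_mem_mul hm hl⟩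


end NGFAux

/-- The normalized generic fiber is sequentially compact: every sequence in it has a
subsequence converging to a point of it. -/
theorem NGF.isSeqCompact (k A : Type*) [Field k] [CommRing A] [IsDomain A]
    [Algebra k A] [Algebra.FiniteType k A] [IsIntegrallyClosed A] (f : A) (hf : f ≠ 0) :
    IsSeqCompact (NGF A f) := by
  classical
  intro x hx
  obtain ⟨V, hVfd, hVcov⟩ := NGFAux.exists_exhaustion (k := k) (A := A)
  -- one-step extraction
  have key : ∀ (m : ℕ) (g : ℕ → ℕ), ∃ g' : ℕ → ℕ, StrictMono g' ∧
      ∀ v ∈ V m, ∃ L : ℝ, Tendsto (fun j => x (g (g' j)) v) atTop (𝓝 L) := by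
    intro m g
    haveI := hVfd m
    exact NGFAux.conv_findim (f := f) (Module.finrank k (V m)) (V m) le_rfl
      (fun n => x (g n)) (fun n => hx (g n))
  set ext : ℕ → (ℕ → ℕ) → (ℕ → ℕ) := fun m g => Classical.choose (key m g) with hext_def
  have hext : ∀ m g, StrictMono (ext m g) ∧
      ∀ v ∈ V m, ∃ L : ℝ, Tendsto (fun j => x (g (ext m g j)) v) atTop (𝓝 L) :=
    fun m g => Classical.choose_spec (key m g)
  -- the chain of extractions
  set G : ℕ → ℕ → ℕ := fun m => Nat.rec (ext 0 id) (fun m' gm => gm ∘ ext (m' + 1) gm) m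
    with hG_def
  have hGsucc : ∀ m, G (m + 1) = G m ∘ ext (m + 1) (G m) := fun m => rfl
  have hGs : ∀ m, StrictMono (G m) := by
    intro m
    induction m with
    | zero => exact (hext 0 id).1
    | succ m ih => rw [hGsucc]; exact ih.comp (hext (m + 1) (G m)).1
  have hGconv : ∀ m, ∀ v ∈ V m, ∃ L : ℝ, Tendsto (fun j => x (G m j) v) atTop (𝓝 L) := by
    intro m
    cases m with
    | zero => exact (hext 0 id).2
    | succ m => rw [hGsucc]; exact (hext (m + 1) (G m)).2
  have hGfac : ∀ (p m : ℕ), ∃ t : ℕ → ℕ, StrictMono t ∧ G (m + p) = G m ∘ t := by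
    intro p
    induction p with
    | zero => exact fun m => ⟨id, strictMono_id, rfl⟩
    | succ p ih =>
      intro m
      obtain ⟨t, ht, hfac⟩ := ih m
      refine ⟨t ∘ ext (m + p + 1) (G (m + p)), ht.comp (hext _ _).1, ?_⟩
      show G (m + p + 1) = _
      rw [hGsucc, hfac]
      rfl
  -- the diagonal sequence
  set diag : ℕ → ℕ := fun j => G j j with hdiag_def
  have hdiagmono : StrictMono diag := by
    apply strictMono_nat_of_lt_succ
    intro j
    calc G j j < G j (j + 1) := hGs j (Nat.lt_succ_self j)
      _ ≤ G j (ext (j + 1) (G j) (j + 1)) := (hGs j).monotone (hext _ _).1.le_apply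
      _ = G (j + 1) (j + 1) := by rw [hGsucc]; rfl
  have hdiagfac : ∀ m j, m ≤ j → ∃ i, j ≤ i ∧ diag j = G m i := by
    intro m j hmj
    obtain ⟨t, ht, hfac⟩ := hGfac (j - m) m
    rw [Nat.add_sub_cancel' hmj] at hfac
    exact ⟨t j, ht.le_apply, by show G j j = G m (t j); rw [hfac]; rfl⟩
  -- pointwise convergence of the diagonal
  have hconv : ∀ a : A, ∃ L : ℝ, Tendsto (fun j => x (diag j) a) atTop (𝓝 L) := by
    intro a
    obtain ⟨m, hm⟩ := hVcov a
    obtain ⟨L, hL⟩ := hGconv m a hm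
    refine ⟨L, ?_⟩
    rw [Metric.tendsto_atTop] at hL ⊢
    intro ε hε
    obtain ⟨N, hN⟩ := hL ε hε
    refine ⟨max N m, fun j hj => ?_⟩
    obtain ⟨i, hi, hd⟩ := hdiagfac m j (le_trans (le_max_right N m) hj)
    rw [hd]
    exact hN i (le_trans (le_trans (le_max_left N m) hj) hi)
  -- the limit function
  set Φ : A → ℝ := fun a => Classical.choose (hconv a) with hΦ_def
  have hΦ : ∀ a : A, Tendsto (fun j => x (diag j) a) atTop (𝓝 (Φ a)) :=
    fun a => Classical.choose_spec (hconv a)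
  have hΦNGF : Φ ∈ NGF A f := by
    refine ⟨?_, ?_, ?_, ?_, ?_, ?_⟩
    · refine tendsto_nhds_unique (hΦ 0) ?_
      have he : (fun j => x (diag j) (0 : A)) = fun _ => (0:ℝ) :=
        funext fun j => (hx (diag j)).1
      rw [he]
      exact tendsto_const_nhds
    · refine tendsto_nhds_unique (hΦ 1) ?_
      have he : (fun j => x (diag j) (1 : A)) = fun _ => (1:ℝ) :=
        funext fun j => (hx (diag j)).2.1
      exact he ▸ tendsto_const_nhds
    · intro a b
      refine tendsto_nhds_unique (hΦ (a * b)) ?_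
      refine Tendsto.congr (fun j => ((hx (diag j)).2.2.1 a b).symm) ((hΦ a).mul (hΦ b))
    · intro a b
      exact le_of_tendsto_of_tendsto' (hΦ (a + b)) ((hΦ a).max (hΦ b))
        (fun j => (hx (diag j)).2.2.2.1 a b)
    · intro a
      constructor
      · exact ge_of_tendsto' (hΦ a) (fun j => ((hx (diag j)).2.2.2.2.1 a).1)
      · exact le_of_tendsto' (hΦ a) (fun j => ((hx (diag j)).2.2.2.2.1 a).2)
    · refine tendsto_nhds_unique (hΦ f) ?_
      have he : (fun j => x (diag j) f) = fun _ => Real.exp (-1) :=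
        funext fun j => (hx (diag j)).2.2.2.2.2
      exact he ▸ tendsto_const_nhds
  exact ⟨Φ, hΦNGF, diag, hdiagmono, tendsto_pi_nhds.2 hΦ⟩
end

section
/- The Berkovich closed unit ball B_n(k) is sequentially compact: every sequence of points of B_n(k) admits a subsequence converging (pointwise on the polynomial ring) to a point of B_n(k). -/
open Filter Topology

/-- The Berkovich closed unit ball `B_n(k)`: multiplicative semi-norms `φ` on the
polynomial ring `k[x₀, …, x_n]` that are trivial on `k`, with `φ x₀ = e⁻¹` and
`φ x_i ≤ 1` for `i ≥ 1`, topologized by pointwise convergence (as a subset of the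
product space). -/
def BerkovichBall (k : Type*) [Field k] (n : ℕ) :
    Set (MvPolynomial (Fin (n + 1)) k → ℝ) :=
  {φ | φ 0 = 0 ∧ φ 1 = 1 ∧ (∀ P Q, φ (P * Q) = φ P * φ Q) ∧
    (∀ P Q, φ (P + Q) ≤ max (φ P) (φ Q)) ∧ (∀ P, 0 ≤ φ P) ∧
    (∀ c : k, c ≠ 0 → φ (MvPolynomial.C c) = 1) ∧
    φ (MvPolynomial.X 0) = Real.exp (-1) ∧
    ∀ i : Fin (n + 1), i ≠ 0 → φ (MvPolynomial.X i) ≤ 1}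

section Aux

variable {k : Type*} [Field k] {n : ℕ}

local notation "R" => MvPolynomial (Fin (n + 1)) k

/-- Every element of the ball is bounded by 1 on all polynomials. -/
lemma BerkovichBall.le_one {φ : R → ℝ} (hφ : φ ∈ BerkovichBall k n) (P : R) : φ P ≤ 1 := by
  obtain ⟨h0, h1, hmul, hadd, hpos, hC, hX0, hXi⟩ := hφ
  induction P using MvPolynomial.induction_on with
  | C c =>
    rcases eq_or_ne c 0 with rfl | hc
    · rw [map_zero, h0]; exact zero_le_one
    · rw [hC c hc]
  | add P Q hP hQ => exact (hadd P Q).trans (max_le hP hQ)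
  | mul_X P i hP =>
    rw [hmul]
    have hXle : φ (MvPolynomial.X i) ≤ 1 := by
      rcases eq_or_ne i 0 with rfl | hi
      · rw [hX0]; exact Real.exp_le_one_iff.2 (by norm_num)
      · exact hXi i hi
    exact mul_le_one₀ hP (hpos _) hXle

/-- Ultrametric bound for finite sums. -/
lemma BerkovichBall.sum_le {φ : R → ℝ} (hφ : φ ∈ BerkovichBall k n) {ι : Type*}
    {s : Finset ι} {f : ι → R} {b : ℝ} (hb : 0 ≤ b) (h : ∀ i ∈ s, φ (f i) ≤ b) :
    φ (∑ i ∈ s, f i) ≤ b := by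
  classical
  induction s using Finset.induction_on with
  | empty => simpa [hφ.1] using hb
  | insert _ _ hi ih =>
    rw [Finset.sum_insert hi]
    refine (hφ.2.2.2.1 _ _).trans (max_le (h _ (Finset.mem_insert_self _ _)) ?_)
    exact ih fun i his => h i (Finset.mem_insert_of_mem his)

lemma BerkovichBall.isClosed : IsClosed (BerkovichBall k n) := by
  have e1 : IsClosed {φ : R → ℝ | φ 0 = 0} :=
    isClosed_eq (continuous_apply (0 : R)) continuous_const
  have e2 : IsClosed {φ : R → ℝ | φ 1 = 1} :=
    isClosed_eq (continuous_apply (1 : R)) continuous_const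
  have e3 : IsClosed {φ : R → ℝ | ∀ P Q : R, φ (P * Q) = φ P * φ Q} := by
    simp only [Set.setOf_forall]
    exact isClosed_iInter fun P => isClosed_iInter fun Q =>
      isClosed_eq (continuous_apply (P * Q)) ((continuous_apply P).mul (continuous_apply Q))
  have e4 : IsClosed {φ : R → ℝ | ∀ P Q : R, φ (P + Q) ≤ max (φ P) (φ Q)} := by
    simp only [Set.setOf_forall]
    exact isClosed_iInter fun P => isClosed_iInter fun Q =>
      isClosed_le (continuous_apply (P + Q)) ((continuous_apply P).max (continuous_apply Q))
  have e5 : IsClosed {φ : R → ℝ | ∀ P : R, 0 ≤ φ P} := by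
    simp only [Set.setOf_forall]
    exact isClosed_iInter fun P => isClosed_le continuous_const (continuous_apply P)
  have e6 : IsClosed {φ : R → ℝ | ∀ c : k, c ≠ 0 → φ (MvPolynomial.C c) = 1} := by
    simp only [Set.setOf_forall]
    exact isClosed_iInter fun c => isClosed_iInter fun _ =>
      isClosed_eq (continuous_apply (MvPolynomial.C c)) continuous_const
  have e7 : IsClosed {φ : R → ℝ | φ (MvPolynomial.X 0) = Real.exp (-1)} :=
    isClosed_eq (continuous_apply _) continuous_const
  have e8 : IsClosed {φ : R → ℝ | ∀ i : Fin (n + 1), i ≠ 0 → φ (MvPolynomial.X i) ≤ 1} := by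
    simp only [Set.setOf_forall]
    exact isClosed_iInter fun i => isClosed_iInter fun _ =>
      isClosed_le (continuous_apply (MvPolynomial.X i)) continuous_const
  have : BerkovichBall k n = {φ : R → ℝ | φ 0 = 0} ∩ ({φ : R → ℝ | φ 1 = 1} ∩
      ({φ : R → ℝ | ∀ P Q : R, φ (P * Q) = φ P * φ Q} ∩
      ({φ : R → ℝ | ∀ P Q : R, φ (P + Q) ≤ max (φ P) (φ Q)} ∩
      ({φ : R → ℝ | ∀ P : R, 0 ≤ φ P} ∩
      ({φ : R → ℝ | ∀ c : k, c ≠ 0 → φ (MvPolynomial.C c) = 1} ∩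
      ({φ : R → ℝ | φ (MvPolynomial.X 0) = Real.exp (-1)} ∩
      {φ : R → ℝ | ∀ i : Fin (n + 1), i ≠ 0 → φ (MvPolynomial.X i) ≤ 1})))))) := rfl
  rw [this]
  exact e1.inter (e2.inter (e3.inter (e4.inter (e5.inter (e6.inter (e7.inter e8))))))
lemma BerkovichBall.isCompact : IsCompact (BerkovichBall k n) := by
  refine (isCompact_univ_pi fun _ : R => isCompact_Icc (a := (0:ℝ)) (b := 1)).of_isClosed_subset
    BerkovichBall.isClosed fun φ hφ => ?_
  exact fun P _ => ⟨hφ.2.2.2.2.1 P, BerkovichBall.le_one hφ P⟩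

end Aux

section Aux2

variable {k : Type*} [Field k] {n : ℕ}

local notation "R" => MvPolynomial (Fin (n + 1)) k

/-- The ideal `{P | w P ≤ ε}` attached to a point of the ball. -/
def berkIdeal (w : R → ℝ) (hw : w ∈ BerkovichBall k n) (ε : ℝ) (hε : 0 < ε) : Ideal R where
  carrier := {P | w P ≤ ε}
  add_mem' {P Q} hP hQ := (hw.2.2.2.1 P Q).trans (max_le hP hQ)
  zero_mem' := by simpa [hw.1] using hε.le
  smul_mem' := fun a P hP => by
    simp only [smul_eq_mul, Set.mem_setOf_eq, hw.2.2.1]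
    calc w a * w P ≤ 1 * ε :=
          mul_le_mul (BerkovichBall.le_one hw a) hP (hw.2.2.2.2.1 P) zero_le_one
    _ = ε := one_mul ε

lemma mem_berkIdeal {w : R → ℝ} {hw : w ∈ BerkovichBall k n} {ε : ℝ} {hε : 0 < ε} {P : R} :
    P ∈ berkIdeal w hw ε hε ↔ w P ≤ ε := Iff.rfl

/-- A nonempty chain has upper bounds over any finite subset. -/
lemma chain_exists_ub {α : Type*} [Preorder α] {c : Set α} (hc : IsChain (· ≤ ·) c)
    {y : α} (hy : y ∈ c) (F : Finset α) (hF : ∀ a ∈ F, a ∈ c) :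
    ∃ z ∈ c, ∀ a ∈ F, a ≤ z := by
  classical
  induction F using Finset.induction_on with
  | empty => exact ⟨y, hy, by simp⟩
  | @insert a F ha ih =>
    obtain ⟨z, hz, hzF⟩ := ih fun b hb => hF b (Finset.mem_insert_of_mem hb)
    have hac := hF a (Finset.mem_insert_self a F)
    rcases hc.total hac hz with h | h
    · refine ⟨z, hz, fun b hb => ?_⟩
      rcases Finset.mem_insert.1 hb with rfl | hb
      · exact h
      · exact hzF b hb
    · refine ⟨a, hac, fun b hb => ?_⟩
      rcases Finset.mem_insert.1 hb with rfl | hb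
      · exact le_refl _
      · exact (hzF b hb).trans h

end Aux2


/-- The Berkovich closed unit ball is sequentially compact: every sequence in it has a
subsequence converging pointwise to a point of it. -/
theorem BerkovichBall.isSeqCompact (k : Type*) [Field k] (n : ℕ) (hn : 1 ≤ n) :
    IsSeqCompact (BerkovichBall k n) := by
  classical
  intro x hx
  set B := BerkovichBall k n with hBdef
  have hBc : IsCompact B := BerkovichBall.isCompact
  have hBcl : IsClosed B := BerkovichBall.isClosed
  -- the set of cluster points of the sequence lying in `B`
  have hclcl : IsClosed {w : MvPolynomial (Fin (n + 1)) k → ℝ | ClusterPt w (map x atTop)} := by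
    have : {w : MvPolynomial (Fin (n + 1)) k → ℝ | ClusterPt w (map x atTop)} =
        ⋂ s ∈ map x atTop, closure s := by
      ext w
      simp [clusterPt_iff_forall_mem_closure, Set.mem_iInter]
    rw [this]
    exact isClosed_biInter fun s _ => isClosed_closure
  set C : Set (MvPolynomial (Fin (n + 1)) k → ℝ) :=
    B ∩ {w | ClusterPt w (map x atTop)} with hCdef
  have hCcl : IsClosed C := hBcl.inter hclcl
  have hmapB : map x atTop ≤ 𝓟 B :=
    le_principal_iff.2 (mem_map.2 (Filter.univ_mem' fun i => hx i))
  obtain ⟨w0, hw0B, hw0cl⟩ := hBc hmapB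
  have hw0 : w0 ∈ C := ⟨hw0B, hw0cl⟩
  -- Zorn's lemma: a minimal cluster point for the pointwise order
  set Cd : Set ((MvPolynomial (Fin (n + 1)) k → ℝ)ᵒᵈ) := {w | OrderDual.ofDual w ∈ C} with hCd
  have hchain : ∀ c ⊆ Cd, IsChain (· ≤ ·) c → ∀ y ∈ c, ∃ ub ∈ Cd, ∀ z ∈ c, z ≤ ub := by
    intro c hcC hch y hy
    haveI : Nonempty c := ⟨⟨y, hy⟩⟩
    set g : MvPolynomial (Fin (n + 1)) k → ℝ :=
      fun P => ⨅ z : c, OrderDual.ofDual z.1 P with hg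
    have hbdd : ∀ P, BddBelow (Set.range fun z : c => OrderDual.ofDual z.1 P) := by
      intro P
      refine ⟨0, ?_⟩
      rintro v ⟨z, rfl⟩
      exact (hcC z.2).1.2.2.2.2.1 P
    have hgle : ∀ z ∈ c, ∀ P, g P ≤ OrderDual.ofDual z P := by
      intro z hz P
      exact ciInf_le (hbdd P) ⟨z, hz⟩
    have hgC : g ∈ C := by
      have hsub : (fun w : (MvPolynomial (Fin (n + 1)) k → ℝ)ᵒᵈ => OrderDual.ofDual w) '' c
          ⊆ C := by
        rintro w ⟨z, hz, rfl⟩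
        exact hcC hz
      refine hCcl.closure_subset_iff.2 hsub ?_
      rw [mem_closure_iff]
      intro o ho hgo
      obtain ⟨I, u, hu, hsubo⟩ := isOpen_pi_iff.1 ho g hgo
      choose δ hδpos hball using fun (P : I) =>
        Metric.isOpen_iff.1 (hu P P.2).1 (g P) (hu P P.2).2
      have hpick : ∀ P : I, ∃ z : c,
          OrderDual.ofDual z.1 (P : MvPolynomial (Fin (n + 1)) k) < g P + δ P := by
        intro P
        have h2 : (⨅ z : c, OrderDual.ofDual z.1 (P : MvPolynomial (Fin (n + 1)) k))
            < g P + δ P := lt_add_of_pos_right _ (hδpos P)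
        obtain ⟨z, hz⟩ := exists_lt_of_ciInf_lt h2
        exact ⟨z, hz⟩
      choose ζ hζ using hpick
      obtain ⟨z, hzc, hzub⟩ := chain_exists_ub hch hy
        (I.attach.image fun P => (ζ P).1)
        (by
          intro a ha
          simp only [Finset.mem_image, Finset.mem_attach, true_and] at ha
          obtain ⟨P, rfl⟩ := ha
          exact (ζ P).2)
      refine ⟨OrderDual.ofDual z, hsubo ?_, Set.mem_image_of_mem _ hzc⟩
      intro P hP
      apply hball ⟨P, hP⟩
      rw [Metric.mem_ball, Real.dist_eq, abs_sub_lt_iff]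
      have hz1 : OrderDual.ofDual z P ≤ OrderDual.ofDual (ζ ⟨P, hP⟩).1 P := by
        have h3 : (ζ ⟨P, hP⟩).1 ≤ z :=
          hzub _ (Finset.mem_image.2 ⟨⟨P, hP⟩, Finset.mem_attach _ _, rfl⟩)
        exact h3 P
      have hz2 := hζ ⟨P, hP⟩
      have hz3 := hgle z hzc P
      have hδ := hδpos ⟨P, hP⟩
      constructor
      · linarith
      · linarith
    refine ⟨OrderDual.toDual g, hgC, fun z hz => ?_⟩
    exact fun P => hgle z hz P
  obtain ⟨wstard, -, hmaxl⟩ := zorn_le_nonempty₀ Cd hchain (OrderDual.toDual w0) hw0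
  set wstar : MvPolynomial (Fin (n + 1)) k → ℝ := OrderDual.ofDual wstard with hwstar
  have hwstarC : wstar ∈ C := hmaxl.prop
  have hwstarB : wstar ∈ B := hwstarC.1
  have hmin : ∀ w' ∈ C, (∀ P, w' P ≤ wstar P) → w' = wstar := by
    intro w' hw' hle
    have h2 : OrderDual.toDual w' ≤ wstard :=
      hmaxl.le_of_ge (show OrderDual.toDual w' ∈ Cd from hw')
        (show wstard ≤ OrderDual.toDual w' from fun P => hle P)
    exact funext fun P => le_antisymm (hle P) (h2 P)
  -- finitely generated ideals and the countable set of generators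
  choose F hF using fun q : {q : ℚ // 0 < q} =>
    IsNoetherian.noetherian (berkIdeal wstar hwstarB (q : ℝ) (by exact_mod_cast q.2))
  set T : Set (MvPolynomial (Fin (n + 1)) k) :=
    ⋃ q : {q : ℚ // 0 < q}, ((F q : Finset (MvPolynomial (Fin (n + 1)) k)) : Set _) with hT
  have hTcnt : T.Countable := Set.countable_iUnion fun q => (F q).countable_toSet
  haveI := hTcnt.to_subtype
  -- extract a subsequence converging to `wstar` on all generators
  set ρ : (MvPolynomial (Fin (n + 1)) k → ℝ) → (T → ℝ) := fun f t => f t with hρ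
  have hρcont : Continuous ρ := continuous_pi fun t => continuous_apply t.1
  have hclw : MapClusterPt wstar atTop x := hwstarC.2
  have hclρ : MapClusterPt (ρ wstar) atTop (ρ ∘ x) := hclw.continuousAt_comp hρcont.continuousAt
  obtain ⟨ψ, hψ, hψt⟩ := TopologicalSpace.FirstCountableTopology.tendsto_subseq hclρ
  have hTt : ∀ t : T, Tendsto (fun i => x (ψ i) (t : MvPolynomial (Fin (n + 1)) k))
      atTop (𝓝 (wstar (t : MvPolynomial (Fin (n + 1)) k))) := by
    intro t
    exact tendsto_pi_nhds.1 hψt t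
  have hgen : ∀ q : {q : ℚ // 0 < q}, ∀ g ∈ F q, wstar g ≤ (q : ℝ) := by
    intro q g hg
    have : g ∈ berkIdeal wstar hwstarB (q : ℝ) (by exact_mod_cast q.2) := by
      rw [← hF q]; exact Submodule.subset_span hg
    exact this
  have hgT : ∀ q : {q : ℚ // 0 < q}, ∀ g ∈ F q, g ∈ T := fun q g hg =>
    Set.mem_iUnion.2 ⟨q, hg⟩
  -- upper bound: eventually `x (ψ i) P < wstar P + δ`
  have hupper : ∀ P, ∀ δ : ℝ, 0 < δ → ∀ᶠ i in atTop, x (ψ i) P < wstar P + δ := by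
    intro P δ hδ
    obtain ⟨q, hq1, hq2⟩ := exists_rat_btwn (show wstar P < wstar P + δ / 2 by linarith)
    have hq0 : 0 < q := by
      have h0 : (0 : ℝ) ≤ wstar P := hwstarB.2.2.2.2.1 P
      exact_mod_cast h0.trans_lt hq1
    have hqR : (0 : ℝ) < (q : ℝ) := by exact_mod_cast hq0
    have hPJ : P ∈ Submodule.span (MvPolynomial (Fin (n + 1)) k)
        ((F ⟨q, hq0⟩ : Finset (MvPolynomial (Fin (n + 1)) k)) : Set _) := by
      rw [hF ⟨q, hq0⟩]
      exact (show wstar P ≤ (q : ℝ) from hq1.le)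
    obtain ⟨a, -, ha⟩ := Submodule.mem_span_finset.1 hPJ
    have hev : ∀ᶠ i in atTop, ∀ g ∈ F ⟨q, hq0⟩, x (ψ i) g < (q : ℝ) + δ / 2 := by
      rw [eventually_all_finset]
      intro g hg
      exact (hTt ⟨g, hgT ⟨q, hq0⟩ g hg⟩).eventually_lt_const
        (lt_of_le_of_lt (hgen ⟨q, hq0⟩ g hg) (by linarith))
    filter_upwards [hev] with i hi
    have hxB := hx (ψ i)
    have hle : x (ψ i) P ≤ (q : ℝ) + δ / 2 := by
      rw [← ha]
      refine BerkovichBall.sum_le hxB (by linarith) ?_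
      intro g hg
      rw [smul_eq_mul, hxB.2.2.1]
      calc x (ψ i) (a g) * x (ψ i) g ≤ 1 * ((q : ℝ) + δ / 2) :=
            mul_le_mul (BerkovichBall.le_one hxB _) (hi g hg).le (hxB.2.2.2.2.1 g) zero_le_one
      _ = (q : ℝ) + δ / 2 := one_mul _
    linarith
  -- lower bound, using minimality of `wstar`
  have hlower : ∀ P, ∀ δ : ℝ, 0 < δ → ∀ᶠ i in atTop, wstar P - δ < x (ψ i) P := by
    intro P δ hδ
    by_contra hcon
    rw [Filter.not_eventually] at hcon
    simp only [not_lt] at hcon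
    set L : Filter ℕ := atTop ⊓ 𝓟 {i | x (ψ i) P ≤ wstar P - δ} with hL
    haveI hLne : L.NeBot := Filter.frequently_iff_neBot.1 hcon
    have hmapL : map (x ∘ ψ) L ≤ 𝓟 B :=
      le_principal_iff.2 (mem_map.2 (Filter.univ_mem' fun i => hx (ψ i)))
    obtain ⟨w', hw'B, hw'cl⟩ := hBc hmapL
    have hw'orig : ClusterPt w' (map x atTop) := by
      refine hw'cl.mono ?_
      calc map (x ∘ ψ) L = map x (map ψ L) := by rw [map_map]
      _ ≤ map x atTop := map_mono ((map_mono inf_le_left).trans hψ.tendsto_atTop)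
    have hw'C : w' ∈ C := ⟨hw'B, hw'orig⟩
    have hle' : ∀ Q, w' Q ≤ wstar Q := by
      intro Q
      have key : ∀ ε : ℝ, 0 < ε → w' Q ≤ wstar Q + ε := by
        intro ε hε
        have hev := hupper Q ε hε
        have hmem : {f : MvPolynomial (Fin (n + 1)) k → ℝ | f Q ≤ wstar Q + ε} ∈
            map (x ∘ ψ) L := by
          rw [mem_map]
          refine mem_of_superset (mem_inf_of_left hev) fun i hi => ?_
          simp only [Set.mem_preimage, Set.mem_setOf_eq, Function.comp_apply]
          exact le_of_lt hi
        have hclosure := clusterPt_iff_forall_mem_closure.1 hw'cl _ hmem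
        rwa [(isClosed_le (continuous_apply Q) continuous_const).closure_eq] at hclosure
      by_contra hlt
      push_neg at hlt
      have := key ((w' Q - wstar Q) / 2) (by linarith)
      linarith
    have hP' : w' P ≤ wstar P - δ := by
      have hmem : {f : MvPolynomial (Fin (n + 1)) k → ℝ | f P ≤ wstar P - δ} ∈
          map (x ∘ ψ) L := by
        rw [mem_map]
        refine mem_of_superset (mem_inf_of_right (mem_principal_self _)) fun i hi => ?_
        simp only [Set.mem_preimage, Set.mem_setOf_eq, Function.comp_apply]
        exact hi
      have hclosure := clusterPt_iff_forall_mem_closure.1 hw'cl _ hmem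
      rwa [(isClosed_le (continuous_apply P) continuous_const).closure_eq] at hclosure
    have heq := hmin w' hw'C hle'
    rw [heq] at hP'
    linarith
  -- conclusion
  refine ⟨wstar, hwstarB, ψ, hψ, ?_⟩
  rw [tendsto_pi_nhds]
  intro P
  rw [Metric.tendsto_atTop]
  intro ε hε
  have h1 := hupper P (ε / 2) (by linarith)
  have h2 := hlower P (ε / 2) (by linarith)
  obtain ⟨N, hN⟩ := eventually_atTop.1 (h1.and h2)
  refine ⟨N, fun i hi => ?_⟩
  obtain ⟨ha, hb⟩ := hN i hi
  rw [Real.dist_eq, abs_sub_lt_iff]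
  simp only [Function.comp_apply]
  constructor <;> linarith
end

section
/- For every subset S of the Berkovich closed unit ball B_n(k) and every point x in the topological closure of S, there exists a sequence of points xₙ ∈ S converging to x; in particular (since B_n(k) is compact) B_n(k) is an angelic topological space. -/
open Filter Topology

/-- A topological space is angelic if every relatively countably compact subset is
relatively compact and every point of the closure of a subset is the limit of a
sequence from that subset. -/
def Angelic (X : Type*) [TopologicalSpace X] : Prop :=
  (∀ A : Set X, (∀ u : ℕ → X, (∀ m, u m ∈ A) → ∃ x : X, MapClusterPt x atTop u) →
    IsCompact (closure A)) ∧
  ∀ A : Set X, ∀ x ∈ closure A, ∃ u : ℕ → X, (∀ m, u m ∈ A) ∧ Tendsto u atTop (𝓝 x)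

namespace BerkAux
open MvPolynomial

variable {k : Type*} [Field k] {n : ℕ}

abbrev Poly (k : Type*) [Field k] (n : ℕ) := MvPolynomial (Fin (n + 1)) k

/-- Polynomials all of whose coefficients lie in the subfield `k₀`. -/
def PolyOver (k₀ : Subfield k) : Set (Poly k n) :=
  {P | ∀ m, MvPolynomial.coeff m P ∈ k₀}

/-- Linear independence over a subfield, hand-rolled. -/
def LinIndepOn (k₀ : Subfield k) {ι : Type} [Fintype ι] (c : ι → k) : Prop :=
  ∀ g : ι → k, (∀ j, g j ∈ k₀) → ∑ j, g j * c j = 0 → ∀ j, g j = 0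

/-- `φ` is orthogonal with respect to the subfield `k₀`. -/
def Orth (φ : Poly k n → ℝ) (k₀ : Subfield k) : Prop :=
  ∀ (ι : Type) (_ : Fintype ι) (c : ι → k) (P : ι → Poly k n),
    LinIndepOn k₀ c → (∀ j, P j ∈ PolyOver k₀) → ∀ j,
      φ (P j) ≤ φ (∑ i, MvPolynomial.C (c i) * P i)

/-- General ultrametric bound on finite sums. -/
lemma upGen {φ : Poly k n → ℝ} (hφ : φ ∈ BerkovichBall k n) {ι : Type*} (s : Finset ι)
    (f : ι → Poly k n) {r : ℝ} (hr : 0 ≤ r) (h : ∀ j ∈ s, φ (f j) ≤ r) :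
    φ (∑ j ∈ s, f j) ≤ r := by
  obtain ⟨h0, -, -, hadd, -, -, -⟩ := hφ
  classical
  induction s using Finset.induction_on with
  | empty => simpa [h0] using hr
  | @insert a s ha ih =>
    rw [Finset.sum_insert ha]
    exact le_trans (hadd _ _)
      (max_le (h a (Finset.mem_insert_self a s)) (ih fun j hj => h j (Finset.mem_insert_of_mem hj)))

lemma phi_prod {φ : Poly k n → ℝ} (hφ : φ ∈ BerkovichBall k n) {ι : Type*} (s : Finset ι)
    (g : ι → Poly k n) : φ (∏ j ∈ s, g j) = ∏ j ∈ s, φ (g j) := by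
  obtain ⟨-, h1, hmul, -⟩ := hφ
  classical
  induction s using Finset.induction_on with
  | empty => simpa using h1
  | @insert a s ha ih =>
    rw [Finset.prod_insert ha, Finset.prod_insert ha, hmul, ih]

lemma phi_pow {φ : Poly k n → ℝ} (hφ : φ ∈ BerkovichBall k n) (Q : Poly k n) (e : ℕ) :
    φ (Q ^ e) = φ Q ^ e := by
  obtain ⟨-, h1, hmul, -⟩ := hφ
  induction e with
  | zero => simpa using h1
  | succ e ih => rw [pow_succ, pow_succ, hmul, ih]

lemma phi_le_one {φ : Poly k n → ℝ} (hφ : φ ∈ BerkovichBall k n) (P : Poly k n) :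
    φ P ≤ 1 := by
  obtain ⟨h0, h1, hmul, hadd, hpos, hC, hX0, hXi⟩ := hφ
  have hφ' : φ ∈ BerkovichBall k n := ⟨h0, h1, hmul, hadd, hpos, hC, hX0, hXi⟩
  have hX : ∀ i : Fin (n + 1), φ (X i) ≤ 1 := by
    intro i
    by_cases hi : i = 0
    · rw [hi, hX0]
      calc Real.exp (-1) ≤ Real.exp 0 := Real.exp_le_exp.mpr (by norm_num)
        _ = 1 := Real.exp_zero
    · exact hXi i hi
  have hmono : ∀ (m : Fin (n + 1) →₀ ℕ) (c : k), φ (monomial m c) ≤ 1 := by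
    intro m c
    by_cases hc : c = 0
    · simp [hc, h0]
    · rw [monomial_eq, hmul, hC c hc, one_mul, Finsupp.prod, phi_prod hφ']
      refine Finset.prod_le_one (fun i _ => hpos _) (fun i _ => ?_)
      rw [phi_pow hφ']
      exact pow_le_one₀ (hpos _) (hX i)
  conv_lhs => rw [← support_sum_monomial_coeff P]
  exact upGen hφ' P.support _ zero_le_one fun m _ => hmono m _

lemma isClosed_ball : IsClosed (BerkovichBall k n) := by
  have h1 : IsClosed {φ : Poly k n → ℝ | φ 0 = 0} :=
    isClosed_eq (continuous_apply 0) continuous_const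
  have h2 : IsClosed {φ : Poly k n → ℝ | φ 1 = 1} :=
    isClosed_eq (continuous_apply 1) continuous_const
  have h3 : IsClosed {φ : Poly k n → ℝ | ∀ P Q, φ (P * Q) = φ P * φ Q} := by
    rw [Set.setOf_forall]
    refine isClosed_iInter fun P => ?_
    rw [Set.setOf_forall]
    refine isClosed_iInter fun Q => ?_
    exact isClosed_eq (continuous_apply (P*Q)) ((continuous_apply P).mul (continuous_apply Q))
  have h4 : IsClosed {φ : Poly k n → ℝ | ∀ P Q, φ (P + Q) ≤ max (φ P) (φ Q)} := by
    rw [Set.setOf_forall]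
    refine isClosed_iInter fun P => ?_
    rw [Set.setOf_forall]
    refine isClosed_iInter fun Q => ?_
    exact isClosed_le (continuous_apply (P+Q)) ((continuous_apply P).max (continuous_apply Q))
  have h5 : IsClosed {φ : Poly k n → ℝ | ∀ P, 0 ≤ φ P} := by
    rw [Set.setOf_forall]
    refine isClosed_iInter fun P => ?_
    exact isClosed_le continuous_const (continuous_apply _)
  have h6 : IsClosed {φ : Poly k n → ℝ | ∀ c : k, c ≠ 0 → φ (MvPolynomial.C c) = 1} := by
    rw [Set.setOf_forall]
    refine isClosed_iInter fun c => ?_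
    by_cases hc : c = 0
    · simp only [hc, ne_eq, not_true_eq_false, false_implies, Set.setOf_true]
      exact isClosed_univ
    · simp only [hc, ne_eq, not_false_eq_true, true_implies]
      exact isClosed_eq (continuous_apply _) continuous_const
  have h7 : IsClosed {φ : Poly k n → ℝ | φ (X 0) = Real.exp (-1)} :=
    isClosed_eq (continuous_apply _) continuous_const
  have h8 : IsClosed {φ : Poly k n → ℝ | ∀ i : Fin (n + 1), i ≠ 0 → φ (X i) ≤ 1} := by
    rw [Set.setOf_forall]
    refine isClosed_iInter fun i => ?_
    by_cases hi : i = 0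
    · simp only [hi, ne_eq, not_true_eq_false, false_implies, Set.setOf_true]
      exact isClosed_univ
    · simp only [hi, ne_eq, not_false_eq_true, true_implies]
      exact isClosed_le (continuous_apply _) continuous_const
  have : BerkovichBall k n = {φ : Poly k n → ℝ | φ 0 = 0} ∩ ({φ | φ 1 = 1} ∩
      ({φ | ∀ P Q, φ (P * Q) = φ P * φ Q} ∩ ({φ | ∀ P Q, φ (P + Q) ≤ max (φ P) (φ Q)} ∩
      ({φ | ∀ P, 0 ≤ φ P} ∩ ({φ | ∀ c : k, c ≠ 0 → φ (MvPolynomial.C c) = 1} ∩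
      ({φ | φ (X 0) = Real.exp (-1)} ∩ {φ | ∀ i : Fin (n + 1), i ≠ 0 → φ (X i) ≤ 1})))))) := by
    rfl
  rw [this]
  exact h1.inter (h2.inter (h3.inter (h4.inter (h5.inter (h6.inter (h7.inter h8))))))

lemma isCompact_ball : IsCompact (BerkovichBall k n) := by
  refine IsCompact.of_isClosed_subset
    (isCompact_univ_pi fun _ : Poly k n => isCompact_Icc (a := (0:ℝ)) (b := 1))
    isClosed_ball ?_
  intro φ hφ
  rw [Set.mem_univ_pi]
  intro P
  exact ⟨hφ.2.2.2.2.1 P, phi_le_one hφ P⟩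


/-- Ultrametric upper bound for sums `∑ C (c j) * P j`. -/
lemma up {φ : Poly k n → ℝ} (hφ : φ ∈ BerkovichBall k n) {ι : Type*} (s : Finset ι)
    (c : ι → k) (P : ι → Poly k n) {r : ℝ} (hr : 0 ≤ r) (h : ∀ j ∈ s, φ (P j) ≤ r) :
    φ (∑ j ∈ s, MvPolynomial.C (c j) * P j) ≤ r := by
  obtain ⟨h0, h1, hmul, hadd, hpos, hC, -⟩ := hφ
  classical
  induction s using Finset.induction_on with
  | empty => simpa [h0] using hr
  | @insert a s ha ih =>
    rw [Finset.sum_insert ha]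
    refine le_trans (hadd _ _) (max_le ?_ (ih fun j hj => h j (Finset.mem_insert_of_mem hj)))
    by_cases hca : c a = 0
    · simpa [hca, h0] using hr
    · rw [hmul, hC _ hca, one_mul]
      exact h a (Finset.mem_insert_self a s)

lemma exists_basis (k₀ : Subfield k) (s : Finset k) :
    ∃ (u : ℕ) (b : Fin u → k), LinIndepOn k₀ b ∧ (∀ l, b l ∈ (s : Set k)) ∧
      ∀ a ∈ s, ∃ γ : Fin u → k, (∀ l, γ l ∈ k₀) ∧ a = ∑ l, γ l * b l := by
  classical
  induction s using Finset.induction_on with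
  | empty =>
    exact ⟨0, Fin.elim0, fun g _ _ j => j.elim0, fun l => l.elim0,
      fun a ha => absurd ha (Finset.notMem_empty a)⟩
  | @insert a s ha ih =>
    obtain ⟨u, b, hind, hbs, hrep⟩ := ih
    by_cases hrepa : ∃ γ : Fin u → k, (∀ l, γ l ∈ k₀) ∧ a = ∑ l, γ l * b l
    · refine ⟨u, b, hind, fun l => Finset.coe_subset.mpr (Finset.subset_insert a s) (hbs l),
        fun a' ha' => ?_⟩
      rcases Finset.mem_insert.mp ha' with rfl | ha'
      · exact hrepa
      · exact hrep a' ha'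
    · refine ⟨u + 1, Fin.snoc b a, ?_, ?_, ?_⟩
      · intro g hg hsum
        rw [Fin.sum_univ_castSucc] at hsum
        simp only [Fin.snoc_castSucc, Fin.snoc_last] at hsum
        by_cases hgl : g (Fin.last u) = 0
        · rw [hgl, zero_mul, add_zero] at hsum
          have hz := hind (fun l => g l.castSucc) (fun l => hg _) hsum
          intro j
          refine Fin.lastCases hgl (fun l => hz l) j
        · exfalso
          apply hrepa
          have h1 : g (Fin.last u) * a = ∑ l, (-(g l.castSucc)) * b l := by
            have := eq_neg_of_add_eq_zero_right hsum
            rw [this, ← Finset.sum_neg_distrib]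
            exact Finset.sum_congr rfl fun l _ => by ring
          refine ⟨fun l => (g (Fin.last u))⁻¹ * (-(g l.castSucc)), fun l =>
            Subfield.mul_mem _ (Subfield.inv_mem _ (hg _)) (Subfield.neg_mem _ (hg _)), ?_⟩
          have h2 : a = (g (Fin.last u))⁻¹ * (g (Fin.last u) * a) := by
            rw [← mul_assoc, inv_mul_cancel₀ hgl, one_mul]
          rw [h2, h1, Finset.mul_sum]
          exact Finset.sum_congr rfl fun l _ => by ring
      · intro l
        refine Fin.lastCases ?_ (fun l' => ?_) l
        · simp
        · simp only [Fin.snoc_castSucc]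
          exact Finset.coe_subset.mpr (Finset.subset_insert a s) (hbs l')
      · intro a' ha'
        rcases Finset.mem_insert.mp ha' with rfl | ha'
        · refine ⟨Fin.snoc (fun _ => (0:k)) 1, ?_, ?_⟩
          · intro l
            refine Fin.lastCases ?_ (fun l' => ?_) l <;> simp [Subfield.one_mem, Subfield.zero_mem]
          · rw [Fin.sum_univ_castSucc]
            simp
        · obtain ⟨γ, hγ, hrepr⟩ := hrep a' ha'
          refine ⟨Fin.snoc γ 0, ?_, ?_⟩
          · intro l
            refine Fin.lastCases ?_ (fun l' => ?_) l <;> simp [hγ, Subfield.zero_mem]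
          · rw [Fin.sum_univ_castSucc]
            simp [hrepr]


lemma decomp (k₀ : Subfield k) {ι : Type} [Fintype ι] (P : ι → Poly k n) :
    ∃ (u : ℕ) (b : Fin u → k) (Q : ι → Fin u → Poly k n),
      LinIndepOn k₀ b ∧ (∀ l, ∃ j m, b l = MvPolynomial.coeff m (P j)) ∧
      (∀ j l, Q j l ∈ PolyOver k₀) ∧ ∀ j, P j = ∑ l, MvPolynomial.C (b l) * Q j l := by
  classical
  set s : Finset k :=
    Finset.univ.biUnion (fun j => (P j).support.image fun m => coeff m (P j)) with hs
  obtain ⟨u, b, hind, hbs, hrep⟩ := exists_basis k₀ s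
  choose γ hγmem hγrep using hrep
  set Γ : k → Fin u → k := fun a => if h : a ∈ s then γ a h else 0 with hΓ
  have hΓmem : ∀ a l, Γ a l ∈ k₀ := by
    intro a l
    rw [hΓ]
    dsimp only
    split
    · exact hγmem _ _ _
    · exact zero_mem _
  have hcs : ∀ j m, m ∈ (P j).support → coeff m (P j) ∈ s := by
    intro j m hm
    exact Finset.mem_biUnion.mpr ⟨j, Finset.mem_univ j,
      Finset.mem_image.mpr ⟨m, hm, rfl⟩⟩
  have hΓrep : ∀ j m, m ∈ (P j).support →
      coeff m (P j) = ∑ l, Γ (coeff m (P j)) l * b l := by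
    intro j m hm
    have h1 := hγrep _ (hcs j m hm)
    rw [hΓ]
    dsimp only
    rw [dif_pos (hcs j m hm)]
    exact h1
  refine ⟨u, b, fun j l => ∑ m ∈ (P j).support, monomial m (Γ (coeff m (P j)) l),
    hind, ?_, ?_, ?_⟩
  · intro l
    have := hbs l
    rw [hs] at this
    obtain ⟨j, -, hj⟩ := Finset.mem_biUnion.mp this
    obtain ⟨m, -, hm⟩ := Finset.mem_image.mp hj
    exact ⟨j, m, hm.symm⟩
  · intro j l m'
    rw [coeff_sum]
    refine sum_mem fun m hm => ?_
    rw [coeff_monomial]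
    split
    · exact hΓmem _ _
    · exact zero_mem _
  · intro j
    have hl : ∀ l, MvPolynomial.C (b l) * ∑ m ∈ (P j).support, monomial m (Γ (coeff m (P j)) l)
        = ∑ m ∈ (P j).support, monomial m (b l * Γ (coeff m (P j)) l) := by
      intro l
      rw [Finset.mul_sum]
      exact Finset.sum_congr rfl fun m _ => C_mul_monomial
    have h2 : ∑ l, MvPolynomial.C (b l) * ∑ m ∈ (P j).support, monomial m (Γ (coeff m (P j)) l)
        = ∑ m ∈ (P j).support, monomial m (coeff m (P j)) := by
      calc ∑ l, MvPolynomial.C (b l) * ∑ m ∈ (P j).support, monomial m (Γ (coeff m (P j)) l)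
          = ∑ l, ∑ m ∈ (P j).support, monomial m (b l * Γ (coeff m (P j)) l) :=
            Finset.sum_congr rfl fun l _ => hl l
        _ = ∑ m ∈ (P j).support, ∑ l, monomial m (b l * Γ (coeff m (P j)) l) :=
            Finset.sum_comm
        _ = ∑ m ∈ (P j).support, monomial m (coeff m (P j)) := by
            refine Finset.sum_congr rfl fun m hm => ?_
            rw [← map_sum]
            congr 1
            conv_rhs => rw [hΓrep j m hm]
            exact Finset.sum_congr rfl fun l _ => mul_comm _ _
    conv_lhs => rw [← support_sum_monomial_coeff (P j)]
    dsimp only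
    rw [h2]

lemma exists_functional {φ : Poly k n → ℝ} (hφ : φ ∈ BerkovichBall k n) (t : ℕ)
    (P : Fin (t + 1) → Poly k n) :
    ∃ α : Fin (t + 1) → k, (∃ j, α j ≠ 0) ∧
      ∀ c : Fin (t + 1) → k,
        (∃ j, φ (∑ i, MvPolynomial.C (c i) * P i) < φ (P j)) → ∑ j, α j * c j = 0 := by
  obtain ⟨h0, h1, hmul, hadd, hpos, hC, -⟩ := hφ
  classical
  set r : ℝ := Finset.univ.sup' Finset.univ_nonempty (fun j => φ (P j)) with hr
  by_cases hrpos : 0 < r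
  · set Z : Submodule k (Fin (t + 1) → k) :=
      { carrier := {c | φ (∑ i, MvPolynomial.C (c i) * P i) < r}
        add_mem' := by
          intro a b ha hb
          simp only [Set.mem_setOf_eq] at ha hb ⊢
          have : (∑ i, MvPolynomial.C ((a + b) i) * P i)
              = (∑ i, MvPolynomial.C (a i) * P i) + ∑ i, MvPolynomial.C (b i) * P i := by
            rw [← Finset.sum_add_distrib]
            exact Finset.sum_congr rfl fun i _ => by
              simp [C_add, add_mul]
          rw [this]
          exact lt_of_le_of_lt (hadd _ _) (max_lt ha hb)
        zero_mem' := by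
          simp only [Set.mem_setOf_eq, Pi.zero_apply, map_zero, zero_mul,
            Finset.sum_const_zero, h0]
          exact hrpos
        smul_mem' := by
          intro a c hc
          simp only [Set.mem_setOf_eq] at hc ⊢
          have : (∑ i, MvPolynomial.C ((a • c) i) * P i)
              = MvPolynomial.C a * ∑ i, MvPolynomial.C (c i) * P i := by
            rw [Finset.mul_sum]
            exact Finset.sum_congr rfl fun i _ => by
              simp [C_mul, mul_assoc]
          rw [this]
          by_cases ha : a = 0
          · simpa [ha, h0] using hrpos
          · rw [hmul, hC _ ha, one_mul]
            exact hc }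
    obtain ⟨jm, -, hjm⟩ := Finset.exists_mem_eq_sup' Finset.univ_nonempty (fun j => φ (P j))
    have hsingle : (∑ i, MvPolynomial.C ((Pi.single jm 1 : Fin (t+1) → k) i) * P i) = P jm := by
      have hss := Finset.sum_eq_single (s := Finset.univ)
        (f := fun i => (MvPolynomial.C ((Pi.single jm 1 : Fin (t+1) → k) i) : Poly k n) * P i) jm
        (fun i _ hi => by simp [Pi.single_eq_of_ne hi])
        (fun h => absurd (Finset.mem_univ jm) h)
      rw [hss]
      simp
    have hxm : (Pi.single jm 1 : Fin (t+1) → k) ∉ Z := by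
      intro hmem
      have hlt : φ (P jm) < r := by rw [← hsingle]; exact hmem
      rw [hr, ← hjm] at hlt
      exact lt_irrefl _ hlt
    obtain ⟨f, hfx, hfmap⟩ := Z.exists_dual_map_eq_bot_of_notMem hxm inferInstance
    refine ⟨fun j => f (Pi.single j 1 : Fin (t+1) → k), ⟨jm, hfx⟩, ?_⟩
    intro c hc
    have hcZ : c ∈ Z := by
      obtain ⟨j, hj⟩ := hc
      refine lt_of_lt_of_le hj ?_
      rw [hr]
      exact Finset.le_sup' (fun j => φ (P j)) (Finset.mem_univ j)
    have hfc : f c = 0 := by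
      have : f c ∈ Z.map f := Submodule.mem_map_of_mem hcZ
      rwa [hfmap, Submodule.mem_bot] at this
    have hcrep : c = ∑ j, c j • (Pi.single j 1 : Fin (t+1) → k) := by
      ext j'
      simp [Pi.single_apply]
    calc ∑ j, f (Pi.single j 1 : Fin (t+1) → k) * c j
        = ∑ j, c j * f (Pi.single j 1 : Fin (t+1) → k) :=
          Finset.sum_congr rfl fun j _ => mul_comm _ _
      _ = f c := by
          conv_rhs => rw [hcrep]
          rw [map_sum]
          exact Finset.sum_congr rfl fun j _ => by rw [map_smul, smul_eq_mul]
      _ = 0 := hfc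
  · refine ⟨fun _ => 1, ⟨0, one_ne_zero⟩, fun c hc => ?_⟩
    exfalso
    obtain ⟨j, hj⟩ := hc
    have h1' : φ (P j) ≤ r := by
      rw [hr]
      exact Finset.le_sup' (fun j => φ (P j)) (Finset.mem_univ j)
    have h2' := hpos (∑ i, MvPolynomial.C (c i) * P i)
    push_neg at hrpos
    linarith


lemma countable_closure {s : Set k} (h : s.Countable) :
    ((Subfield.closure s : Subfield k) : Set k).Countable := by
  rw [← Set.countable_coe_iff] at h ⊢
  rw [← Cardinal.mk_le_aleph0_iff] at h ⊢
  exact (Subfield.cardinalMk_closure_le_max s).trans (max_le h le_rfl)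

lemma countable_polyOver {k₀ : Subfield k} (h : ((k₀ : Set k)).Countable) :
    (PolyOver (n := n) k₀).Countable := by
  classical
  haveI : Countable (k₀ : Set k) := h.to_subtype
  set F : ∀ P : Poly k n, P ∈ PolyOver (n := n) k₀ →
      Finset ((Fin (n + 1) →₀ ℕ) × (k₀ : Set k)) :=
    fun P hP => P.support.attach.image fun m => (m.1, ⟨coeff m.1 P, hP m.1⟩) with hF
  have key : ∀ P hP P' hP', F P hP = F P' hP' →
      ∀ m ∈ P.support, coeff m P' = coeff m P := by
    intro P hP P' hP' he m hm
    have hmem : ((m, ⟨coeff m P, hP m⟩) : (Fin (n + 1) →₀ ℕ) × (k₀ : Set k)) ∈ F P' hP' := by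
      rw [← he, hF]
      exact Finset.mem_image.mpr ⟨⟨m, hm⟩, Finset.mem_attach _ _, rfl⟩
    rw [hF] at hmem
    obtain ⟨m₂, -, hp⟩ := Finset.mem_image.mp hmem
    obtain ⟨hp1, hp2⟩ := Prod.ext_iff.mp hp
    have hp2' : coeff m₂.1 P' = coeff m P := Subtype.ext_iff.mp hp2
    have hp1' : (m₂ : Fin (n + 1) →₀ ℕ) = m := hp1
    rwa [hp1'] at hp2'
  have hinj : Function.Injective (fun P : PolyOver (n := n) k₀ => F P.1 P.2) := by
    rintro ⟨P, hP⟩ ⟨P', hP'⟩ he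
    simp only at he
    refine Subtype.ext (MvPolynomial.ext _ _ fun m => ?_)
    by_cases hm : m ∈ P.support
    · exact (key P hP P' hP' he m hm).symm
    · by_cases hm' : m ∈ P'.support
      · exact key P' hP' P hP he.symm m hm'
      · rw [notMem_support_iff.mp hm, notMem_support_iff.mp hm']
  exact Set.countable_coe_iff.mp (Function.Injective.countable hinj)

lemma mem_closure_iUnion {K : ℕ → Subfield k} (mono : Monotone K) {a : k} :
    a ∈ Subfield.closure (⋃ i, (K i : Set k)) ↔ ∃ i, a ∈ K i := by
  constructor
  · intro h
    refine Subfield.closure_induction ?_ ?_ ?_ ?_ ?_ ?_ h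
    · intro x hx
      simpa using hx
    · exact ⟨0, one_mem _⟩
    · rintro x y - - ⟨i, hi⟩ ⟨j, hj⟩
      exact ⟨max i j, add_mem (mono (le_max_left i j) hi) (mono (le_max_right i j) hj)⟩
    · rintro x - ⟨i, hi⟩
      exact ⟨i, neg_mem hi⟩
    · rintro x - ⟨i, hi⟩
      exact ⟨i, inv_mem hi⟩
    · rintro x y - - ⟨i, hi⟩ ⟨j, hj⟩
      exact ⟨max i j, mul_mem (mono (le_max_left i j) hi) (mono (le_max_right i j) hj)⟩
  · rintro ⟨i, hi⟩
    exact Subfield.subset_closure (Set.mem_iUnion.mpr ⟨i, hi⟩)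

lemma polyOver_closure_iUnion {K : ℕ → Subfield k} (mono : Monotone K) {P : Poly k n}
    (h : P ∈ PolyOver (Subfield.closure (⋃ i, (K i : Set k)))) :
    ∃ i, P ∈ PolyOver (K i) := by
  classical
  have h' : ∀ m ∈ P.support, ∃ i, coeff m P ∈ K i :=
    fun m _ => (mem_closure_iUnion mono).mp (h m)
  choose f hf using h'
  refine ⟨P.support.attach.sup fun m => f m.1 m.2, fun m => ?_⟩
  by_cases hm : m ∈ P.support
  · exact mono (Finset.le_sup (Finset.mem_attach _ ⟨m, hm⟩)) (hf m hm)
  · rw [notMem_support_iff.mp hm]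
    exact zero_mem _


lemma exists_fieldOf {φ : Poly k n → ℝ} (hφ : φ ∈ BerkovichBall k n) :
    ∃ k₀ : Subfield k, ((k₀ : Set k)).Countable ∧ Orth φ k₀ := by
  classical
  choose F hF1 hF2 using exists_functional hφ
  set A : Subfield k → Set k := fun k' =>
    ⋃ (q : Σ t : ℕ, {P : Fin (t + 1) → Poly k n // ∀ j, P j ∈ PolyOver k'}),
      Set.range (F q.1 q.2.1) with hA
  set step : Subfield k → Subfield k := fun k' =>
    Subfield.closure ((k' : Set k) ∪ A k') with hstep
  set KK : ℕ → Subfield k := fun i => step^[i] (Subfield.closure ∅) with hKK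
  have hle : ∀ k', k' ≤ step k' := fun k' =>
    fun a ha => Subfield.subset_closure (Or.inl ha)
  have hKKsucc : ∀ i, KK (i + 1) = step (KK i) := by
    intro i
    rw [hKK]
    simp [Function.iterate_succ_apply']
  have monoKK : Monotone KK := monotone_nat_of_le_succ fun i => by
    rw [hKKsucc i]; exact hle _
  have hcnt : ∀ i, ((KK i : Set k)).Countable := by
    intro i
    induction i with
    | zero => exact countable_closure Set.countable_empty
    | succ i ih =>
      rw [hKKsucc i]
      refine countable_closure (Set.Countable.union ih ?_)
      haveI hc1 : Countable (PolyOver (n := n) (KK i)) := (countable_polyOver ih).to_subtype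
      haveI hc2 : ∀ t : ℕ, Countable {P : Fin (t + 1) → Poly k n // ∀ j, P j ∈ PolyOver (KK i)} := by
        intro t
        have hinj : Function.Injective
            (fun (P : {P : Fin (t + 1) → Poly k n // ∀ j, P j ∈ PolyOver (KK i)}) =>
              (fun j => (⟨P.1 j, P.2 j⟩ : PolyOver (n := n) (KK i)))) := by
          rintro ⟨P, hP⟩ ⟨P', hP'⟩ he
          refine Subtype.ext (funext fun j => ?_)
          exact Subtype.ext_iff.mp (congrFun he j)
        exact hinj.countable
      exact Set.countable_iUnion fun q => Set.countable_range _
  refine ⟨Subfield.closure (⋃ i, (KK i : Set k)),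
    countable_closure (Set.countable_iUnion hcnt), ?_⟩
  intro ι hι c P hind hP j₀
  rcases isEmpty_or_nonempty ι with hemp | hne
  · exact (IsEmpty.false j₀).elim
  · obtain ⟨t, ht⟩ : ∃ t, Fintype.card ι = t + 1 :=
      ⟨Fintype.card ι - 1, (Nat.succ_pred_eq_of_pos Fintype.card_pos).symm⟩
    set e : ι ≃ Fin (t + 1) := (Fintype.equivFin ι).trans (finCongr ht) with he
    set P' : Fin (t + 1) → Poly k n := P ∘ e.symm with hP'
    set c' : Fin (t + 1) → k := c ∘ e.symm with hc'
    have hstage : ∀ j : Fin (t + 1), ∃ i, P' j ∈ PolyOver (KK i) :=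
      fun j => polyOver_closure_iUnion monoKK (hP _)
    choose g hg using hstage
    set i₀ : ℕ := Finset.univ.sup g with hi₀
    have hPi : ∀ j, P' j ∈ PolyOver (KK i₀) :=
      fun j m => monoKK (Finset.le_sup (Finset.mem_univ j)) (hg j m)
    have hmem : ∀ j, F t P' j ∈ Subfield.closure (⋃ i, (KK i : Set k)) := by
      intro j
      apply Subfield.subset_closure
      refine Set.mem_iUnion.mpr ⟨i₀ + 1, ?_⟩
      rw [hKKsucc i₀]
      exact Subfield.subset_closure
        (Or.inr (Set.mem_iUnion.mpr ⟨⟨t, ⟨P', hPi⟩⟩, Set.mem_range_self j⟩))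
    by_contra hcon
    push_neg at hcon
    have hdrop : ∃ j, φ (∑ i, MvPolynomial.C (c' i) * P' i) < φ (P' j) := by
      refine ⟨e j₀, ?_⟩
      have hsum : ∑ i, MvPolynomial.C (c' i) * P' i = ∑ i, MvPolynomial.C (c i) * P i := by
        refine Fintype.sum_equiv e.symm _ _ fun j => rfl
      rw [hsum]
      have : P' (e j₀) = P j₀ := by simp [hP']
      rwa [this]
    have hker := hF2 t P' c' hdrop
    have hzero := hind (fun i => F t P' (e i)) (fun i => hmem _) ?_
    · obtain ⟨j, hj⟩ := hF1 t P'
      exact hj (by simpa using hzero (e.symm j))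
    · rw [← hker]
      refine Fintype.sum_equiv e _ _ fun i => ?_
      simp [hc']

lemma orth_mono {φ : Poly k n → ℝ} (hφ : φ ∈ BerkovichBall k n) {k₀ k₁ : Subfield k}
    (h01 : k₀ ≤ k₁) (h : Orth φ k₀) : Orth φ k₁ := by
  intro ι hι c P hind hP j₀
  obtain ⟨u, b, Q, hbind, hbco, hQ, hPdec⟩ := decomp k₀ P
  have hb1 : ∀ l, b l ∈ k₁ := by
    intro l
    obtain ⟨j, m, hm⟩ := hbco l
    rw [hm]
    exact hP j m
  have hindprod : LinIndepOn k₀ (fun p : ι × Fin u => c p.1 * b p.2) := by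
    intro g hg hsum j
    have hsum' : ∑ i : ι, (∑ l, g (i, l) * b l) * c i = 0 := by
      rw [← hsum, Fintype.sum_prod_type]
      refine Finset.sum_congr rfl fun i _ => ?_
      rw [Finset.sum_mul]
      exact Finset.sum_congr rfl fun l _ => by ring
    have hGi := hind (fun i => ∑ l, g (i, l) * b l)
      (fun i => sum_mem fun l _ => mul_mem (h01 (hg _)) (hb1 l)) hsum'
    have hgl := hbind (fun l => g (j.1, l)) (fun l => hg _) (hGi j.1)
    have := hgl j.2
    simpa using this
  have horth := h (ι × Fin u) inferInstance (fun p => c p.1 * b p.2)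
    (fun p => Q p.1 p.2) hindprod (fun p => hQ p.1 p.2)
  have hTeq : (∑ p : ι × Fin u, MvPolynomial.C (c p.1 * b p.2) * Q p.1 p.2)
      = ∑ i, MvPolynomial.C (c i) * P i := by
    rw [Fintype.sum_prod_type]
    refine Finset.sum_congr rfl fun i _ => ?_
    rw [hPdec i, Finset.mul_sum]
    refine Finset.sum_congr rfl fun l _ => ?_
    rw [C_mul]
    ring
  rw [hPdec j₀]
  refine up hφ Finset.univ b (fun l => Q j₀ l) (hφ.2.2.2.2.1 _) ?_
  intro l _
  have := horth (j₀, l)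
  rwa [hTeq] at this

theorem main_seq (S : Set ↥(BerkovichBall k n)) (x : ↥(BerkovichBall k n))
    (hx : x ∈ closure S) :
    ∃ u : ℕ → ↥(BerkovichBall k n), (∀ m, u m ∈ S) ∧ Tendsto u atTop (𝓝 x) := by
  classical
  choose fieldOf hcnt horth using
    fun ψ : ↥(BerkovichBall k n) => exists_fieldOf (n := n) ψ.2
  set Kof : ∀ m : ℕ, (Fin m → (↥(BerkovichBall k n) × (ℕ → Poly k n))) → Subfield k :=
    fun m prev => Subfield.closure
      ((fieldOf x : Set k) ∪ ⋃ j : Fin m, (fieldOf (prev j).1 : Set k)) with hKofdef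
  have hKofCnt : ∀ m prev, ((Kof m prev : Set k)).Countable := fun m prev =>
    countable_closure ((hcnt x).union (Set.countable_iUnion fun j => hcnt _))
  have hstep : ∀ (m : ℕ) (prev : Fin m → (↥(BerkovichBall k n) × (ℕ → Poly k n))),
      ∃ y : ↥(BerkovichBall k n) × (ℕ → Poly k n), y.1 ∈ S ∧
      (PolyOver (Kof m prev) ⊆ Set.range y.2) ∧
      ∀ Q : Poly k n, ((∃ j : Fin m, ∃ i ≤ m, Q = (prev j).2 i) ∨ (∃ i ≤ m, Q = y.2 i)) →
        |y.1.1 Q - x.1 Q| < 1 / (m + 1) := by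
    intro m prev
    have h0mem : (0 : Poly k n) ∈ PolyOver (Kof m prev) := by
      intro mm
      rw [MvPolynomial.coeff_zero]
      exact zero_mem _
    obtain ⟨e, he⟩ := (countable_polyOver (hKofCnt m prev)).exists_eq_range ⟨0, h0mem⟩
    set F : Set (Poly k n) :=
      (⋃ j : Fin m, (prev j).2 '' {i | i ≤ m}) ∪ e '' {i | i ≤ m} with hFdef
    have hFfin : F.Finite :=
      Set.Finite.union (Set.finite_iUnion fun j => (Set.finite_Iic m).image _)
        ((Set.finite_Iic m).image _)
    set V : Set (↥(BerkovichBall k n)) :=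
      {ψ | ∀ Q ∈ F, |ψ.1 Q - x.1 Q| < 1 / (m + 1)} with hVdef
    have hVopen : IsOpen V := by
      have hV2 : V = ⋂ Q ∈ F,
          (fun ψ : ↥(BerkovichBall k n) => ψ.1 Q) ⁻¹' Metric.ball (x.1 Q) (1 / (m + 1)) := by
        ext ψ
        simp [hVdef, Real.dist_eq]
      rw [hV2]
      exact hFfin.isOpen_biInter fun Q _ =>
        Metric.isOpen_ball.preimage ((continuous_apply Q).comp continuous_subtype_val)
    have hxV : x ∈ V := by
      intro Q hQ
      simp only [sub_self, abs_zero]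
      positivity
    obtain ⟨ψ, hψV, hψS⟩ := _root_.mem_closure_iff.mp hx V hVopen hxV
    refine ⟨(ψ, e), hψS, le_of_eq he, ?_⟩
    rintro Q (⟨j, i, hi, rfl⟩ | ⟨i, hi, rfl⟩)
    · exact hψV _ (Or.inl (Set.mem_iUnion.mpr ⟨j, Set.mem_image_of_mem _ hi⟩))
    · exact hψV _ (Or.inr (Set.mem_image_of_mem _ hi))
  choose step hstep1 hstep2 hstep3 using hstep
  let states : ∀ m : ℕ, Fin m → (↥(BerkovichBall k n) × (ℕ → Poly k n)) :=
    fun m => Nat.rec Fin.elim0 (fun m' prev => Fin.snoc prev (step m' prev)) m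
  have hst : ∀ m, states (m + 1) = Fin.snoc (states m) (step m (states m)) := fun m => rfl
  have hcoh : ∀ (m j : ℕ) (h : j < m), states m ⟨j, h⟩ = step j (states j) := by
    intro m
    induction m with
    | zero => exact fun j h => absurd h (Nat.not_lt_zero j)
    | succ m ih =>
      intro j h
      rcases Nat.lt_succ_iff_lt_or_eq.mp h with hj | rfl
      · have hidx : (⟨j, h⟩ : Fin (m + 1)) = Fin.castSucc ⟨j, hj⟩ := rfl
        rw [hst m, hidx]
        rw [Fin.snoc_castSucc]
        exact ih j hj
      · have hidx : (⟨j, h⟩ : Fin (j + 1)) = Fin.last j := rfl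
        rw [hst j, hidx]
        exact Fin.snoc_last _ _
  set u : ℕ → ↥(BerkovichBall k n) := fun m => (step m (states m)).1 with hudef
  set em : ℕ → (ℕ → Poly k n) := fun m => (step m (states m)).2 with hemdef
  set K' : ℕ → Subfield k := fun m => Subfield.closure
    ((fieldOf x : Set k) ∪ ⋃ j : Fin m, (fieldOf (u (j : ℕ)) : Set k)) with hK'def
  have hKK' : ∀ m, Kof m (states m) = K' m := by
    intro m
    have hU : (⋃ j : Fin m, (fieldOf (states m j).1 : Set k))
        = ⋃ j : Fin m, (fieldOf (u (j : ℕ)) : Set k) := by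
      refine Set.iUnion_congr fun j => ?_
      rw [hcoh m j j.2]
    rw [hKofdef, hK'def]
    dsimp only
    rw [hU]
  have hmonoK' : Monotone K' := by
    refine monotone_nat_of_le_succ fun m => ?_
    rw [hK'def]
    refine Subfield.closure_mono (Set.union_subset_union_right _ ?_)
    refine Set.iUnion_subset fun j => ?_
    exact Set.subset_iUnion_of_subset (Fin.castSucc j) (le_of_eq rfl)
  set Kinf : Subfield k := Subfield.closure (⋃ i, (K' i : Set k)) with hKinfdef
  have hK'le : ∀ i, K' i ≤ Kinf := by
    intro i a ha
    exact Subfield.subset_closure (Set.mem_iUnion.mpr ⟨i, ha⟩)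
  have hfx_le : fieldOf x ≤ Kinf := by
    refine le_trans ?_ (hK'le 0)
    intro a ha
    exact Subfield.subset_closure (Or.inl ha)
  have hfu_le : ∀ m, fieldOf (u m) ≤ Kinf := by
    intro m
    refine le_trans ?_ (hK'le (m + 1))
    intro a ha
    refine Subfield.subset_closure (Or.inr (Set.mem_iUnion.mpr ⟨Fin.last m, ?_⟩))
    exact ha
  have horthx : Orth (x : Poly k n → ℝ) Kinf := orth_mono x.2 hfx_le (horth x)
  have horthu : ∀ m, Orth ((u m : ↥(BerkovichBall k n)) : Poly k n → ℝ) Kinf :=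
    fun m => orth_mono (u m).2 (hfu_le m) (horth (u m))
  -- convergence on PolyOver Kinf
  have hconv : ∀ Q ∈ PolyOver (n := n) Kinf,
      Tendsto (fun m => (u m : Poly k n → ℝ) Q) atTop (𝓝 ((x : Poly k n → ℝ) Q)) := by
    intro Q hQ
    obtain ⟨i₁, hi₁⟩ := polyOver_closure_iUnion hmonoK' hQ
    have hQrange : Q ∈ Set.range (em i₁) := by
      apply hstep2 i₁ (states i₁)
      rw [hKK' i₁]
      exact hi₁
    obtain ⟨i₀, hi₀⟩ := hQrange
    have hbound : ∀ m ≥ max (i₁ + 1) i₀, |(u m : Poly k n → ℝ) Q - (x : Poly k n → ℝ) Q|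
        < 1 / (m + 1) := by
      intro m hm
      have hlt : i₁ < m := lt_of_lt_of_le (Nat.lt_succ_self i₁) (le_trans (le_max_left _ _) hm)
      have hle : i₀ ≤ m := le_trans (le_max_right _ _) hm
      refine hstep3 m (states m) Q (Or.inl ⟨⟨i₁, hlt⟩, i₀, hle, ?_⟩)
      rw [hcoh m i₁ hlt]
      exact hi₀.symm
    rw [tendsto_iff_dist_tendsto_zero]
    refine squeeze_zero' (Eventually.of_forall fun m => dist_nonneg) ?_
      tendsto_one_div_add_atTop_nhds_zero_nat
    refine Filter.eventually_atTop.mpr ⟨max (i₁ + 1) i₀, fun m hm => ?_⟩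
    rw [Real.dist_eq]
    exact le_of_lt (hbound m hm)
  refine ⟨u, fun m => hstep1 m (states m), ?_⟩
  rw [tendsto_subtype_rng, tendsto_pi_nhds]
  intro P
  obtain ⟨w, b, Q, hbind, -, hQover, hdec⟩ := decomp Kinf (fun _ : Fin 1 => P)
  have hxlow : ∀ l, (x : Poly k n → ℝ) (Q 0 l) ≤ (x : Poly k n → ℝ) P := by
    intro l
    have := horthx (Fin w) inferInstance b (Q 0) hbind (hQover 0) l
    rwa [← hdec 0] at this
  have hulow : ∀ m l, (u m : Poly k n → ℝ) (Q 0 l) ≤ (u m : Poly k n → ℝ) P := by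
    intro m l
    have := horthu m (Fin w) inferInstance b (Q 0) hbind (hQover 0) l
    rwa [← hdec 0] at this
  have hQconv : ∀ l, Tendsto (fun m => (u m : Poly k n → ℝ) (Q 0 l)) atTop
      (𝓝 ((x : Poly k n → ℝ) (Q 0 l))) := fun l => hconv _ (hQover 0 l)
  rw [Metric.tendsto_atTop]
  intro ε hε
  have hev : ∀ᶠ m in atTop, ∀ l, |(u m : Poly k n → ℝ) (Q 0 l)
      - (x : Poly k n → ℝ) (Q 0 l)| < ε / 2 := by
    rw [eventually_all]
    intro l
    have := Metric.tendsto_nhds.mp (hQconv l) (ε / 2) (by positivity)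
    refine this.mono fun m hm => ?_
    rwa [Real.dist_eq] at hm
  obtain ⟨N, hN⟩ := Filter.eventually_atTop.mp hev
  refine ⟨N, fun m hm => ?_⟩
  have hbnd := hN m hm
  have h1 : (u m : Poly k n → ℝ) P ≤ (x : Poly k n → ℝ) P + ε / 2 := by
    conv_lhs => rw [hdec 0]
    refine up (u m).2 Finset.univ b (Q 0) ?_ ?_
    · have := (x.2).2.2.2.2.1 P
      linarith
    · intro l _
      have habs := abs_lt.mp (hbnd l)
      have := hxlow l
      linarith [habs.2]
  have h2 : (x : Poly k n → ℝ) P ≤ (u m : Poly k n → ℝ) P + ε / 2 := by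
    conv_lhs => rw [hdec 0]
    refine up x.2 Finset.univ b (Q 0) ?_ ?_
    · have := ((u m).2).2.2.2.2.1 P
      linarith
    · intro l _
      have habs := abs_lt.mp (hbnd l)
      have := hulow m l
      linarith [habs.1]
  rw [Real.dist_eq, abs_sub_lt_iff]
  constructor <;> linarith
end BerkAux

/-- Every point of the closure of a subset `S` of the Berkovich closed unit ball is the
limit of a sequence of points of `S`; in particular the ball is angelic. -/
theorem BerkovichBall.closure_sequential_and_angelic (k : Type*) [Field k] (n : ℕ)
    (hn : 1 ≤ n) :
    (∀ S : Set ↥(BerkovichBall k n), ∀ x ∈ closure S,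
      ∃ u : ℕ → ↥(BerkovichBall k n), (∀ m, u m ∈ S) ∧ Tendsto u atTop (𝓝 x)) ∧
    Angelic ↥(BerkovichBall k n) := by
  have hmain : ∀ S : Set ↥(BerkovichBall k n), ∀ x ∈ closure S,
      ∃ u : ℕ → ↥(BerkovichBall k n), (∀ m, u m ∈ S) ∧ Tendsto u atTop (𝓝 x) :=
    fun S x hx => BerkAux.main_seq S x hx
  refine ⟨hmain, ?_, hmain⟩
  intro A _
  haveI : CompactSpace ↥(BerkovichBall k n) :=
    isCompact_iff_compactSpace.mp BerkAux.isCompact_ball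
  exact isClosed_closure.isCompact
end

section
/- Let t ∈ R be nonzero with t⁻¹ ∉ R, and let f ∈ R. For natural numbers p, p' and positive natural numbers q, q' with p'·q ≤ p·q', if f^q·t^{-p} ∈ R then f^{q'}·t^{-p'} ∈ R. (In other words, the set I(f) = {p/q ∈ ℚ_{≥0} : f^q·t^{-p} ∈ R} is a downward-closed segment of ℚ_{≥0} containing 0.) -/
/-- Let `R` be a valuation subring of a field `K`, let `t ∈ R` be nonzero with
`t⁻¹ ∉ R`, and let `f ∈ R`. If `p'/q' ≤ p/q` (i.e. `p' * q ≤ p * q'`) and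
`f ^ q * t ^ (-p) ∈ R`, then `f ^ q' * t ^ (-p') ∈ R`: the set
`I(f) = {p/q ∈ ℚ≥0 : f^q t^{-p} ∈ R}` is a downward-closed segment containing `0`. -/
theorem ValuationSubring.segment (K : Type*) [Field K] (R : ValuationSubring K)
    (t : K) (ht : t ∈ R) (ht0 : t ≠ 0) (ht1 : t⁻¹ ∉ R)
    (f : K) (hf : f ∈ R)
    (p p' q q' : ℕ) (hq : 1 ≤ q) (hq' : 1 ≤ q') (hle : p' * q ≤ p * q')
    (h : f ^ q * t ^ (-(p : ℤ)) ∈ R) :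
    f ^ q' * t ^ (-(p' : ℤ)) ∈ R := by
  rcases eq_or_ne f 0 with rfl | hf0
  · rw [zero_pow (by omega), zero_mul]; exact zero_mem R
  set v := R.valuation
  rw [← R.valuation_le_one_iff] at h ⊢
  rw [map_mul, map_pow, map_zpow₀] at h ⊢
  have htv : v t ≤ 1 := (R.valuation_le_one_iff t).mpr ht
  have htv1 : v t < 1 := by
    rcases lt_or_eq_of_le htv with h' | h'
    · exact h'
    · exact absurd ((R.valuation_le_one_iff _).mp (by rw [map_inv₀, h', inv_one])) ht1
  have ht0' : v t ≠ 0 := by simpa using ht0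
  -- rewrite h : v f ^ q ≤ v t ^ p
  rw [zpow_neg, mul_inv_le_iff₀ (zero_lt_iff.mpr (zpow_ne_zero _ ht0')), one_mul, zpow_natCast] at h
  rw [zpow_neg, mul_inv_le_iff₀ (zero_lt_iff.mpr (zpow_ne_zero _ ht0')), one_mul, zpow_natCast]
  have key : (v f ^ q') ^ q ≤ (v t ^ p') ^ q := by
    calc (v f ^ q') ^ q = (v f ^ q) ^ q' := by rw [← pow_mul, ← pow_mul, mul_comm]
    _ ≤ (v t ^ p) ^ q' := pow_le_pow_left' h q'
    _ = v t ^ (p * q') := by rw [← pow_mul]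
    _ ≤ v t ^ (p' * q) := pow_le_pow_right_of_le_one' htv1.le hle
    _ = (v t ^ p') ^ q := by rw [← pow_mul]
  exact le_of_pow_le_pow_left₀ (Nat.one_le_iff_ne_zero.mp hq) (zero_le') key
end

section
/- Let t ∈ R be nonzero with t⁻¹ ∉ R. For g ∈ R define Φ(g) ∈ [0, ∞] (an element of the extended nonnegative reals) as the supremum of the set {p/q : p ∈ ℕ, q ∈ ℕ, q ≥ 1, g^q·t^{-p} ∈ R} (a nonempty subset of ℚ_{≥0}, since it contains 0). Then for all f, g ∈ R one has Φ(f·g) = Φ(f) + Φ(g) and Φ(f + g) ≥ min(Φ(f), Φ(g)), where addition and min are taken in [0, ∞]. -/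
open scoped ENNReal

/-- For a valuation subring `R` of `K` and `t ∈ R` nonzero with `t⁻¹ ∉ R`, `Φ g` is the
supremum in `[0, ∞]` of the rationals `p/q ≥ 0` with `g ^ q * t ^ (-p) ∈ R` (this set
contains `0` whenever `g ∈ R`). -/
noncomputable def Phi (K : Type*) [Field K] (R : ValuationSubring K) (t : K) (g : K) :
    ℝ≥0∞ :=
  sSup {x : ℝ≥0∞ | ∃ p q : ℕ, 1 ≤ q ∧ g ^ q * t ^ (-(p : ℤ)) ∈ R ∧
    x = (p : ℝ≥0∞) / (q : ℝ≥0∞)}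

/-- `Φ` is additive on products and satisfies the ultrametric-type inequality
`Φ (f + g) ≥ min (Φ f) (Φ g)`, with values in `[0, ∞]`. -/
theorem Phi.add_min (K : Type*) [Field K] (R : ValuationSubring K)
    (t : K) (ht : t ∈ R) (ht0 : t ≠ 0) (ht1 : t⁻¹ ∉ R)
    (f g : K) (hf : f ∈ R) (hg : g ∈ R) :
    Phi K R t (f * g) = Phi K R t f + Phi K R t g ∧
      min (Phi K R t f) (Phi K R t g) ≤ Phi K R t (f + g) := by
  classical
  set v := R.valuation with hv
  have hvt : v t ≠ 0 := (Valuation.ne_zero_iff _).mpr ht0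
  -- membership characterization
  have hmem : ∀ (x : K) (p q : ℕ), x ^ q * t ^ (-(p : ℤ)) ∈ R ↔ v x ^ q ≤ v t ^ p := by
    intro x p q
    rw [← ValuationSubring.valuation_le_one_iff, map_mul, map_pow, map_zpow₀,
      zpow_neg, zpow_natCast, mul_inv_le_iff₀ (zero_lt_iff.mpr (pow_ne_zero p hvt)), one_mul]
  have hle : ∀ (x : K) (p q : ℕ), 1 ≤ q → v x ^ q ≤ v t ^ p →
      (p : ℝ≥0∞) / (q : ℝ≥0∞) ≤ Phi K R t x := fun x p q hq h =>
    le_sSup ⟨p, q, hq, (hmem x p q).mpr h, rfl⟩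
  have hmono : ∀ x y : K, v x ≤ v y → Phi K R t y ≤ Phi K R t x := by
    intro x y h
    refine sSup_le_sSup ?_
    rintro _ ⟨p, q, hq, hm, rfl⟩
    exact ⟨p, q, hq, (hmem x p q).mpr (le_trans (pow_le_pow_left' h q)
      ((hmem y p q).mp hm)), rfl⟩
  have hne : ∀ x : K, x ∈ R →
      (0 : ℝ≥0∞) ∈ {x_1 : ℝ≥0∞ | ∃ p q : ℕ, 1 ≤ q ∧ x ^ q * t ^ (-(p : ℤ)) ∈ R ∧
        x_1 = (p : ℝ≥0∞) / (q : ℝ≥0∞)} := by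
    intro x hx
    exact ⟨0, 1, le_rfl, by simpa using hx, by simp⟩
  have h0 : Phi K R t 0 = ⊤ := by
    by_contra h
    obtain ⟨n, hn⟩ := ENNReal.exists_nat_gt h
    have := hle 0 n 1 le_rfl (by simpa using zero_le')
    simp only [Nat.cast_one, div_one] at this
    exact absurd this (not_le.mpr hn)
  constructor
  · rcases eq_or_ne f 0 with rfl | hf0
    · rw [zero_mul, h0, top_add]
    rcases eq_or_ne g 0 with rfl | hg0
    · rw [mul_zero, h0, add_top]
    have hvf : v f ≠ 0 := (Valuation.ne_zero_iff _).mpr hf0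
    have hvg : v g ≠ 0 := (Valuation.ne_zero_iff _).mpr hg0
    apply le_antisymm
    · -- Phi (f*g) ≤ Phi f + Phi g
      refine sSup_le ?_
      rintro _ ⟨p, q, hq, hm, rfl⟩
      rw [hmem] at hm
      rcases Nat.eq_zero_or_pos p with rfl | hp
      · simp
      have key : ∀ n : ℕ, 1 ≤ n →
          ((n * p - 1 : ℕ) : ℝ≥0∞) / ((n * q : ℕ) : ℝ≥0∞) ≤ Phi K R t f + Phi K R t g := by
        intro n hn
        set P : ℕ → Prop := fun a => v f ^ (n * q) ≤ v t ^ a with hP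
        have hP0 : P 0 := by
          simpa [hP] using
            pow_le_one' ((ValuationSubring.valuation_le_one_iff R f).mpr hf) (n * q)
        set a := Nat.findGreatest P (n * p) with ha
        have ha_le : a ≤ n * p := Nat.findGreatest_le _
        have haP : P a := Nat.findGreatest_spec (Nat.zero_le _) hP0
        have hnq : 1 ≤ n * q := Nat.mul_le_mul hn hq
        have hprod : v f ^ (n * q) * v g ^ (n * q) ≤ v t ^ (n * p) := by
          have h1 := pow_le_pow_left' hm n
          rw [← pow_mul, ← pow_mul, mul_comm q n, mul_comm p n, map_mul, mul_pow] at h1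
          exact h1
        rcases eq_or_lt_of_le ha_le with heq | hlt
        · have h1 : ((n * p : ℕ) : ℝ≥0∞) / ((n * q : ℕ) : ℝ≥0∞) ≤ Phi K R t f :=
            hle f (n * p) (n * q) hnq (heq ▸ haP)
          refine le_trans (le_trans ?_ h1) le_self_add
          gcongr
          exact_mod_cast Nat.sub_le _ _
        · have hnotP : ¬ P (a + 1) := Nat.findGreatest_is_greatest (Nat.lt_succ_self a) hlt
          have hltP : v t ^ (a + 1) < v f ^ (n * q) := not_le.mp hnotP
          have hg' : v g ^ (n * q) ≤ v t ^ (n * p - (a + 1)) := by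
            by_contra hcon
            push_neg at hcon
            have h2 := Left.mul_lt_mul_of_nonneg hltP hcon zero_le' zero_le'
            rw [← pow_add, Nat.add_sub_cancel' hlt] at h2
            exact absurd hprod (not_le.mpr h2)
          have hA : ((a : ℕ) : ℝ≥0∞) / ((n * q : ℕ) : ℝ≥0∞) ≤ Phi K R t f :=
            hle f a (n * q) hnq haP
          have hB : ((n * p - (a + 1) : ℕ) : ℝ≥0∞) / ((n * q : ℕ) : ℝ≥0∞) ≤ Phi K R t g :=
            hle g _ (n * q) hnq hg'
          calc ((n * p - 1 : ℕ) : ℝ≥0∞) / ((n * q : ℕ) : ℝ≥0∞)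
              = ((a + (n * p - (a + 1)) : ℕ) : ℝ≥0∞) / ((n * q : ℕ) : ℝ≥0∞) := by
                have hh : n * p - 1 = a + (n * p - (a + 1)) := by omega
                rw [hh]
            _ = ((a : ℕ) : ℝ≥0∞) / ((n * q : ℕ) : ℝ≥0∞)
                + ((n * p - (a + 1) : ℕ) : ℝ≥0∞) / ((n * q : ℕ) : ℝ≥0∞) := by
                rw [Nat.cast_add, ENNReal.add_div]
            _ ≤ Phi K R t f + Phi K R t g := add_le_add hA hB
      refine ENNReal.le_of_forall_pos_le_add fun ε hε _ => ?_
      obtain ⟨n, hn⟩ := ENNReal.exists_inv_nat_lt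
        (show (ε : ℝ≥0∞) ≠ 0 from ENNReal.coe_ne_zero.mpr hε.ne')
      have hn1 : 1 ≤ n := by
        rcases Nat.eq_zero_or_pos n with rfl | h
        · rw [Nat.cast_zero, ENNReal.inv_zero] at hn
          exact absurd hn not_top_lt
        · exact h
      have hq0 : ((q : ℕ) : ℝ≥0∞) ≠ 0 := Nat.cast_ne_zero.mpr (by omega)
      have hn0 : ((n : ℕ) : ℝ≥0∞) ≠ 0 := Nat.cast_ne_zero.mpr (by omega)
      calc (p : ℝ≥0∞) / (q : ℝ≥0∞)
          = ((n * p : ℕ) : ℝ≥0∞) / ((n * q : ℕ) : ℝ≥0∞) := by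
            push_cast
            rw [ENNReal.mul_div_mul_left _ _ hn0 (ENNReal.natCast_ne_top n)]
        _ = ((n * p - 1 : ℕ) : ℝ≥0∞) / ((n * q : ℕ) : ℝ≥0∞)
            + 1 / ((n * q : ℕ) : ℝ≥0∞) := by
            rw [← ENNReal.add_div]
            congr 1
            have hnp : 1 ≤ n * p := Nat.mul_le_mul hn1 hp
            have : ((n * p : ℕ) : ℝ≥0∞) = ((n * p - 1 + 1 : ℕ) : ℝ≥0∞) := by
              congr 1
              omega
            rw [this, Nat.cast_add, Nat.cast_one]
        _ ≤ (Phi K R t f + Phi K R t g) + ↑ε := by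
            refine add_le_add (key n hn1) ?_
            rw [one_div]
            refine le_trans (ENNReal.inv_le_inv.mpr ?_) hn.le
            exact_mod_cast Nat.le_mul_of_pos_right n (by omega)
    · -- Phi f + Phi g ≤ Phi (f*g)
      have hsum : ∀ {A B : Set ℝ≥0∞} {c : ℝ≥0∞}, A.Nonempty → B.Nonempty →
          (∀ a ∈ A, ∀ b ∈ B, a + b ≤ c) → sSup A + sSup B ≤ c := by
        intro A B c hA hB h
        rw [ENNReal.sSup_add hA]
        refine iSup₂_le fun a ha => ?_
        rw [ENNReal.add_sSup hB]
        exact iSup₂_le fun b hb => h a ha b hb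
      refine hsum ⟨0, hne f hf⟩ ⟨0, hne g hg⟩ ?_
      rintro _ ⟨p1, q1, hq1, hm1, rfl⟩ _ ⟨p2, q2, hq2, hm2, rfl⟩
      rw [hmem] at hm1 hm2
      have hbound : v (f * g) ^ (q1 * q2) ≤ v t ^ (p1 * q2 + p2 * q1) := by
        rw [map_mul, mul_pow, pow_add]
        refine mul_le_mul' ?_ ?_
        · rw [pow_mul, pow_mul]
          exact pow_le_pow_left' hm1 q2
        · rw [mul_comm q1 q2, pow_mul, pow_mul]
          exact pow_le_pow_left' hm2 q1
      have hQ : 1 ≤ q1 * q2 := Nat.mul_le_mul hq1 hq2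
      have h1 := hle (f * g) (p1 * q2 + p2 * q1) (q1 * q2) hQ hbound
      refine le_trans (le_of_eq ?_) h1
      have h1ne : ((q1 : ℕ) : ℝ≥0∞) ≠ 0 := Nat.cast_ne_zero.mpr (by omega)
      have h2ne : ((q2 : ℕ) : ℝ≥0∞) ≠ 0 := Nat.cast_ne_zero.mpr (by omega)
      push_cast
      rw [ENNReal.add_div]
      congr 1
      · rw [mul_comm (q1 : ℝ≥0∞) (q2 : ℝ≥0∞), mul_comm (p1 : ℝ≥0∞) (q2 : ℝ≥0∞),
          ENNReal.mul_div_mul_left _ _ h2ne (ENNReal.natCast_ne_top q2)]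
      · rw [mul_comm ((q1 : ℕ) : ℝ≥0∞) ((q2 : ℕ) : ℝ≥0∞),
          ENNReal.mul_div_mul_right _ _ h1ne (ENNReal.natCast_ne_top q1)]
  · rcases le_max_iff.mp (v.map_add f g) with h | h
    · exact le_trans (min_le_left _ _) (hmono (f + g) f h)
    · exact le_trans (min_le_right _ _) (hmono (f + g) g h)
end
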